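/- arXiv:1302.0580 — 7 statements merged into one kernel-verified Lean document; each statement's English description precedes it below -/
import Mathlib

section
/- There exists an equivalence relation U on ℕ that is recursively enumerable (as a set of pairs) such that every recursively enumerable equivalence relation E on ℕ is computably reducible to U. -/
open Nat.Partrec (Code)
open Nat.Partrec.Code
open Denumerable Encodable

/-- `E` is computably reducible to `F`. -/
def ComputablyReducible (E F : ℕ → ℕ → Prop) : Prop :=
  ∃ f : ℕ → ℕ, Computable f ∧ ∀ x y, E x y ↔ F (f x) (f y)

/-- One step in a chain witnessing membership in the equivalence closure of `W_e`. -/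
def StepP (e s a b : ℕ) : Prop :=
  (evaln s (ofNat Code e) (Nat.pair a b)).isSome = true ∨
  (evaln s (ofNat Code e) (Nat.pair b a)).isSome = true ∨ a = b

def stepB (e s a b : ℕ) : Bool :=
  (evaln s (ofNat Code e) (Nat.pair a b)).isSome ||
  (evaln s (ofNat Code e) (Nat.pair b a)).isSome || decide (a = b)

lemma stepB_iff {e s a b : ℕ} : stepB e s a b = true ↔ StepP e s a b := by
  simp [stepB, StepP, Bool.or_eq_true, or_assoc]

lemma StepP.symm {e s a b : ℕ} (h : StepP e s a b) : StepP e s b a := by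
  rcases h with h | h | h
  · exact Or.inr (Or.inl h)
  · exact Or.inl h
  · exact Or.inr (Or.inr h.symm)

lemma StepP.mono {e s s' a b : ℕ} (hs : s ≤ s') (h : StepP e s a b) : StepP e s' a b := by
  rcases h with h | h | h
  · rcases Option.isSome_iff_exists.1 h with ⟨v, hv⟩
    exact Or.inl (Option.isSome_iff_exists.2 ⟨v, evaln_mono hs hv⟩)
  · rcases Option.isSome_iff_exists.1 h with ⟨v, hv⟩
    exact Or.inr (Or.inl (Option.isSome_iff_exists.2 ⟨v, evaln_mono hs hv⟩))
  · exact Or.inr (Or.inr h)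

def matB (e x y k : ℕ) : Bool :=
  ((decide ((ofNat (List ℕ) k.unpair.2).head? = some x)) &&
    (decide ((ofNat (List ℕ) k.unpair.2).reverse.head? = some y))) &&
  (List.range ((ofNat (List ℕ) k.unpair.2).length - 1)).all fun i =>
    stepB e k.unpair.1 ((ofNat (List ℕ) k.unpair.2).getD i 0)
      ((ofNat (List ℕ) k.unpair.2).getD (i + 1) 0)

/-- `Mat e s L x y` : `L` is a chain from `x` to `y` of `s`-bounded steps. -/
def Mat (e s : ℕ) (L : List ℕ) (x y : ℕ) : Prop :=
  L.head? = some x ∧ L.getLast? = some y ∧ L.Chain' (StepP e s)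

lemma range_all_iff_chain' (e s : ℕ) (L : List ℕ) :
    ((List.range (L.length - 1)).all fun i =>
      stepB e s (L.getD i 0) (L.getD (i + 1) 0)) = true ↔ L.Chain' (StepP e s) := by
  unfold List.Chain'
  rw [List.all_eq_true, List.isChain_iff_getElem]
  constructor
  · intro h i hi
    have h1 : i < L.length := by omega
    have h2 : i + 1 < L.length := by omega
    have := stepB_iff.1 (h i (List.mem_range.2 (by omega)))
    rwa [L.getD_eq_getElem 0 h1, L.getD_eq_getElem 0 h2] at this
  · intro h i hi
    have hi' := List.mem_range.1 hi
    have h1 : i < L.length := by omega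
    have h2 : i + 1 < L.length := by omega
    rw [stepB_iff, L.getD_eq_getElem 0 h1, L.getD_eq_getElem 0 h2]
    exact h i (by omega)

lemma matB_iff_mat {e x y k : ℕ} :
    matB e x y k = true ↔ Mat e k.unpair.1 (ofNat (List ℕ) k.unpair.2) x y := by
  rw [matB, Mat, Bool.and_eq_true, Bool.and_eq_true, range_all_iff_chain']
  simp [and_assoc]

lemma exists_matB_iff {e x y : ℕ} :
    (∃ k, matB e x y k = true) ↔ ∃ s L, Mat e s L x y := by
  constructor
  · rintro ⟨k, hk⟩
    exact ⟨_, _, matB_iff_mat.1 hk⟩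
  · rintro ⟨s, L, hL⟩
    refine ⟨Nat.pair s (encode L), matB_iff_mat.2 ?_⟩
    rwa [Nat.unpair_pair, ofNat_encode]

def Conn (e x y : ℕ) : Prop := ∃ s L, Mat e s L x y

lemma Conn.refl (e x : ℕ) : Conn e x x :=
  ⟨0, [x], rfl, rfl, List.isChain_singleton x⟩

lemma Conn.symm {e x y : ℕ} (h : Conn e x y) : Conn e y x := by
  rcases h with ⟨s, L, h1, h2, h3⟩
  refine ⟨s, L.reverse, ?_, ?_, ?_⟩
  · rwa [List.head?_reverse]
  · rwa [List.getLast?_reverse]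
  · unfold List.Chain'
    rw [List.isChain_reverse]
    exact h3.imp fun {a b} h => h.symm

lemma Conn.trans {e x y z : ℕ} (h : Conn e x y) (h' : Conn e y z) : Conn e x z := by
  rcases h with ⟨s₁, L₁, h1, h2, h3⟩
  rcases h' with ⟨s₂, L₂, g1, g2, g3⟩
  have h3' : L₁.Chain' (StepP e (max s₁ s₂)) := h3.imp fun {a b} h => h.mono (le_max_left _ _)
  have g3' : L₂.Chain' (StepP e (max s₁ s₂)) := g3.imp fun {a b} h => h.mono (le_max_right _ _)
  rcases L₂ with _ | ⟨b, t⟩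
  · simp at g1
  have hb : b = y := by simpa using g1
  subst hb
  rcases t with _ | ⟨c, t⟩
  · have hz : z = b := by simpa using g2.symm
    subst hz
    exact ⟨max s₁ s₂, L₁, h1, h2, h3'⟩
  · refine ⟨max s₁ s₂, L₁ ++ (c :: t), ?_, ?_, ?_⟩
    · rcases L₁ with _ | ⟨a, t₁⟩
      · simp at h1
      · simpa using h1
    · rw [List.getLast?_append]
      rw [List.getLast?_cons_cons] at g2
      rw [g2]
      rfl
    · unfold List.Chain'
      rw [List.isChain_append]
      refine ⟨h3', g3'.tail, ?_⟩
      intro p hp q hq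
      have hpy : b = p := by
        rw [h2] at hp; simpa using hp
      have hqc : c = q := by simpa using hq
      subst hpy; subst hqc
      exact (List.isChain_cons_cons.1 g3').1

def UU (m n : ℕ) : Prop :=
  m.unpair.1 = n.unpair.1 ∧ Conn m.unpair.1 m.unpair.2 n.unpair.2

lemma UU_equiv : Equivalence UU :=
  ⟨fun m => ⟨rfl, Conn.refl _ _⟩,
   fun {m n} h => ⟨h.1.symm, h.1 ▸ h.2.symm⟩,
   fun {m n p} h h' => ⟨h.1.trans h'.1, h.2.trans (h.1 ▸ h'.2)⟩⟩

/-- Auxiliary: all over a list is primrec. -/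
lemma Primrec.list_all' {α β : Type} [Primcodable α] [Primcodable β]
    {f : α → List β} {p : α → β → Bool} (hf : Primrec f) (hp : Primrec₂ p) :
    Primrec fun a => (f a).all (p a) :=
  (Primrec.list_foldr hf (Primrec.const true)
      (Primrec.to₂ (Primrec.and.comp (hp.comp Primrec.fst (Primrec.fst.comp Primrec.snd))
        (Primrec.snd.comp Primrec.snd)))).of_eq fun a => by
    induction f a with
    | nil => rfl
    | cons b l ih => simp [List.all_cons, ih]

set_option maxHeartbeats 1000000 in
lemma stepB_prim : Primrec fun v : (ℕ × ℕ) × ℕ × ℕ => stepB v.1.1 v.1.2 v.2.1 v.2.2 := by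
  have he : Primrec fun v : (ℕ × ℕ) × ℕ × ℕ =>
      (evaln v.1.2 (ofNat Code v.1.1) (Nat.pair v.2.1 v.2.2)).isSome :=
    Primrec.option_isSome.comp <|
      primrec_evaln.comp <|
        Primrec.pair
          (Primrec.pair (Primrec.snd.comp Primrec.fst)
            ((Primrec.ofNat Code).comp (Primrec.fst.comp Primrec.fst)))
          (Primrec₂.natPair.comp (Primrec.fst.comp Primrec.snd) (Primrec.snd.comp Primrec.snd))
  have he' : Primrec fun v : (ℕ × ℕ) × ℕ × ℕ =>
      (evaln v.1.2 (ofNat Code v.1.1) (Nat.pair v.2.2 v.2.1)).isSome :=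
    Primrec.option_isSome.comp <|
      primrec_evaln.comp <|
        Primrec.pair
          (Primrec.pair (Primrec.snd.comp Primrec.fst)
            ((Primrec.ofNat Code).comp (Primrec.fst.comp Primrec.fst)))
          (Primrec₂.natPair.comp (Primrec.snd.comp Primrec.snd) (Primrec.fst.comp Primrec.snd))
  exact Primrec.or.comp (Primrec.or.comp he he')
    (Primrec.eq.comp (Primrec.fst.comp Primrec.snd) (Primrec.snd.comp Primrec.snd)).decide

set_option maxHeartbeats 1000000 in
lemma matB_prim : Primrec₂ fun (p : ℕ × ℕ) (k : ℕ) => matB p.1.unpair.1 p.1.unpair.2 p.2.unpair.2 k := by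
  unfold matB
  -- a : (ℕ × ℕ) × ℕ  (p, k)
  have hL : Primrec fun a : (ℕ × ℕ) × ℕ => ofNat (List ℕ) a.2.unpair.2 :=
    (Primrec.ofNat (List ℕ)).comp (Primrec.snd.comp (Primrec.unpair.comp Primrec.snd))
  have hs : Primrec fun a : (ℕ × ℕ) × ℕ => a.2.unpair.1 :=
    Primrec.fst.comp (Primrec.unpair.comp Primrec.snd)
  have he : Primrec fun a : (ℕ × ℕ) × ℕ => a.1.1.unpair.1 :=
    Primrec.fst.comp (Primrec.unpair.comp (Primrec.fst.comp Primrec.fst))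
  have hx : Primrec fun a : (ℕ × ℕ) × ℕ => a.1.1.unpair.2 :=
    Primrec.snd.comp (Primrec.unpair.comp (Primrec.fst.comp Primrec.fst))
  have hy : Primrec fun a : (ℕ × ℕ) × ℕ => a.1.2.unpair.2 :=
    Primrec.snd.comp (Primrec.unpair.comp (Primrec.snd.comp Primrec.fst))
  have h1 : Primrec fun a : (ℕ × ℕ) × ℕ =>
      decide ((ofNat (List ℕ) a.2.unpair.2).head? = some a.1.1.unpair.2) :=
    (Primrec.eq.comp (Primrec.list_head?.comp hL) (Primrec.option_some.comp hx)).decide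
  have h2 : Primrec fun a : (ℕ × ℕ) × ℕ =>
      decide ((ofNat (List ℕ) a.2.unpair.2).reverse.head? = some a.1.2.unpair.2) :=
    (Primrec.eq.comp (Primrec.list_head?.comp (Primrec.list_reverse.comp hL))
      (Primrec.option_some.comp hy)).decide
  have h3 : Primrec fun a : (ℕ × ℕ) × ℕ =>
      (List.range ((ofNat (List ℕ) a.2.unpair.2).length - 1)).all fun i =>
        stepB a.1.1.unpair.1 a.2.unpair.1 ((ofNat (List ℕ) a.2.unpair.2).getD i 0)
          ((ofNat (List ℕ) a.2.unpair.2).getD (i + 1) 0) := by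
    apply Primrec.list_all'
    · exact Primrec.list_range.comp
        (Primrec.nat_sub.comp (Primrec.list_length.comp hL) (Primrec.const 1))
    · exact stepB_prim.comp <|
        Primrec.pair (Primrec.pair (he.comp Primrec.fst) (hs.comp Primrec.fst))
          (Primrec.pair
            ((Primrec.list_getD 0).comp (hL.comp Primrec.fst) Primrec.snd)
            ((Primrec.list_getD 0).comp (hL.comp Primrec.fst)
              (Primrec.succ.comp Primrec.snd)))
  exact Primrec.and.comp (Primrec.and.comp h1 h2) h3

/-- r.e.-ness of an existentially quantified computable boolean predicate. -/
lemma rePred_exists {α : Type} [Primcodable α] {f : α → ℕ → Bool} (hf : Computable₂ f) :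
    REPred fun a => ∃ k, f a k = true := by
  have hp : Partrec₂ fun (a : α) (n : ℕ) => (Part.some (f a n) : Part Bool) :=
    Computable.partrec (Computable₂.comp hf Computable.fst Computable.snd)
  have := (Partrec.rfind hp).dom_re
  apply this.of_eq
  intro a
  refine Nat.rfind_dom.trans ?_
  constructor
  · rintro ⟨n, hn, -⟩
    exact ⟨n, (Part.mem_some_iff.1 hn).symm⟩
  · rintro ⟨n, hn⟩
    exact ⟨n, Part.mem_some_iff.2 hn.symm, fun _ => trivial⟩

lemma UU_re : REPred fun p : ℕ × ℕ => UU p.1 p.2 := by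
  have hb : Computable₂ fun (p : ℕ × ℕ) (k : ℕ) =>
      (decide (p.1.unpair.1 = p.2.unpair.1)) && matB p.1.unpair.1 p.1.unpair.2 p.2.unpair.2 k := by
    apply Primrec.to_comp
    exact Primrec.and.comp
      (Primrec.eq.comp
        (Primrec.fst.comp (Primrec.unpair.comp (Primrec.fst.comp Primrec.fst)))
        (Primrec.fst.comp (Primrec.unpair.comp (Primrec.snd.comp Primrec.fst)))).decide
      matB_prim
  apply (rePred_exists hb).of_eq
  intro p
  rw [UU, Conn, ← exists_matB_iff]
  constructor
  · rintro ⟨k, hk⟩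
    rw [Bool.and_eq_true, decide_eq_true_iff] at hk
    exact ⟨hk.1, k, hk.2⟩
  · rintro ⟨h1, k, hk⟩
    exact ⟨k, by rw [Bool.and_eq_true, decide_eq_true_iff]; exact ⟨h1, hk⟩⟩

lemma chain'_trans {E : ℕ → ℕ → Prop} (hE : Equivalence E) :
    ∀ L : List ℕ, L.Chain' E → ∀ {x y}, L.head? = some x → L.getLast? = some y → E x y := by
  intro L
  induction L with
  | nil => intro _ x y h; simp at h
  | cons a t ih =>
    intro hc x y hx hy
    have hax : a = x := by simpa using hx
    subst hax
    cases t with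
    | nil =>
      have : a = y := by simpa using hy
      subst this; exact hE.refl a
    | cons b t' =>
      have h1 : E a b := (List.isChain_cons_cons.1 hc).1
      have h2 : E b y := ih (List.isChain_cons_cons.1 hc).2 rfl (by simpa using hy)
      exact hE.trans h1 h2

/-- There is an r.e. equivalence relation to which every r.e. equivalence
relation is computably reducible. -/
theorem stmt_1 :
    ∃ U : ℕ → ℕ → Prop, Equivalence U ∧ REPred (fun p : ℕ × ℕ => U p.1 p.2) ∧
      ∀ E : ℕ → ℕ → Prop, Equivalence E → REPred (fun p : ℕ × ℕ => E p.1 p.2) →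
        ComputablyReducible E U := by
  refine ⟨UU, UU_equiv, UU_re, ?_⟩
  intro E hE hre
  -- get a code for E
  have hpart : Partrec fun n : ℕ =>
      Part.assert (E n.unpair.1 n.unpair.2) fun _ => Part.some () := by
    have := hre.comp (Computable.pair
      (Primrec.to_comp (Primrec.fst.comp Primrec.unpair))
      (Primrec.to_comp (Primrec.snd.comp Primrec.unpair)))
    exact this
  have hnat : Nat.Partrec fun n : ℕ =>
      (Part.assert (E n.unpair.1 n.unpair.2) fun _ => Part.some ()).map encode := by
    have h := hpart
    unfold Partrec at h
    apply h.of_eq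
    intro n
    simp [Part.bind_some]
  obtain ⟨c, hc⟩ := exists_code.1 hnat
  set e := encode c with he
  have hdom : ∀ a b : ℕ, (eval c (Nat.pair a b)).Dom ↔ E a b := by
    intro a b
    rw [hc]
    show (∃ _ : E (Nat.unpair (Nat.pair a b)).1 (Nat.unpair (Nat.pair a b)).2, True) ↔ E a b
    rw [Nat.unpair_pair]
    exact ⟨fun h => h.1, fun h => ⟨h, trivial⟩⟩
  refine ⟨fun x => Nat.pair e x, Primrec.to_comp (Primrec₂.natPair.comp (Primrec.const e) Primrec.id), ?_⟩
  intro x y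
  rw [UU, Nat.unpair_pair, Nat.unpair_pair]
  simp only []
  constructor
  · intro hxy
    refine ⟨by trivial, ?_⟩
    -- E x y gives a halting computation; get step bound
    have : (eval c (Nat.pair x y)).Dom := (hdom x y).2 hxy
    obtain ⟨v, hv⟩ := Part.dom_iff_mem.1 this
    obtain ⟨s, hs⟩ := evaln_complete.1 hv
    refine ⟨s, [x, y], rfl, rfl, ?_⟩
    refine List.isChain_cons_cons.2 ⟨?_, List.isChain_singleton y⟩
    left
    rw [he, ofNat_encode]
    exact Option.isSome_iff_exists.2 ⟨v, hs⟩
  · rintro ⟨-, s, L, h1, h2, h3⟩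
    -- each step implies E
    have hstep : ∀ a b, StepP e s a b → E a b := by
      intro a b hab
      rcases hab with h | h | h
      · obtain ⟨v, hv⟩ := Option.isSome_iff_exists.1 h
        rw [he, ofNat_encode] at hv
        have : (eval c (Nat.pair a b)).Dom := Part.dom_iff_mem.2 ⟨v, evaln_sound hv⟩
        exact (hdom a b).1 this
      · obtain ⟨v, hv⟩ := Option.isSome_iff_exists.1 h
        rw [he, ofNat_encode] at hv
        have : (eval c (Nat.pair b a)).Dom := Part.dom_iff_mem.2 ⟨v, evaln_sound hv⟩
        exact hE.symm ((hdom b a).1 this)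
      · exact h ▸ hE.refl a
    exact chain'_trans hE L (h3.imp fun {a b} h => hstep a b h) h1 h2
end

section
/- For every Π⁰₁ equivalence relation E on ℕ there is a total computable function f : ℕ → ℕ → ℕ such that for all x, y: E x y ↔ ∀ n, f x n = f y n. -/
namespace Stmt3Aux

/-- Bounded "for all `t ≤ k`" as a Bool, by primitive recursion. -/
def ball (p : ℕ → Bool) : ℕ → Bool :=
  fun k => Nat.rec (p 0) (fun t IH => IH && p (t + 1)) k

theorem ball_succ (p : ℕ → Bool) (k : ℕ) : ball p (k + 1) = (ball p k && p (k + 1)) := rfl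

theorem ball_iff {p : ℕ → Bool} {k : ℕ} : ball p k = true ↔ ∀ t, t ≤ k → p t = true := by
  induction k with
  | zero =>
    constructor
    · intro h t ht; interval_cases t; exact h
    · intro h; exact h 0 (le_refl 0)
  | succ k ih =>
    rw [ball_succ, Bool.and_eq_true, ih]
    constructor
    · rintro ⟨h1, h2⟩ t ht
      rcases Nat.lt_or_ge t (k + 1) with h | h
      · exact h1 t (Nat.lt_succ_iff.mp h)
      · have : t = k + 1 := le_antisymm ht h
        rwa [this]
    · intro h
      exact ⟨fun t ht => h t (le_trans ht (Nat.le_succ k)), h (k + 1) (le_refl _)⟩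

theorem ball_comp {α : Type*} [Primcodable α] {p : α → ℕ → Bool} {k : α → ℕ}
    (hp : Computable₂ p) (hk : Computable k) :
    Computable fun a => ball (p a) (k a) := by
  have hh : Computable fun q : α × (ℕ × Bool) => (q.2.2 && p q.1 (q.2.1 + 1)) :=
    (Primrec.dom_bool₂ (· && ·)).to_comp.comp
      (Computable.snd.comp Computable.snd)
      (hp.comp Computable.fst (Computable.succ.comp (Computable.fst.comp Computable.snd)))
  have hg : Computable fun a => p a 0 := hp.comp Computable.id (Computable.const 0)
  exact Computable.nat_rec hk hg hh.to₂

section Main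

variable (R : ℕ → ℕ → ℕ → Bool)

/-- the (symmetrized, reflexivized, cumulative) approximation to `E`. -/
def aliveB (x y s : ℕ) : Bool :=
  ball (fun t => decide (x = y) || (R x y t && R y x t)) s

theorem alive_iff {x y s : ℕ} :
    aliveB R x y s = true ↔ ∀ t, t ≤ s → x = y ∨ (R x y t = true ∧ R y x t = true) := by
  unfold aliveB
  rw [ball_iff]
  constructor
  · intro h t ht
    have := h t ht
    simpa using this
  · intro h t ht
    simpa using h t ht

theorem alive_refl (x s : ℕ) : aliveB R x x s = true := by
  rw [alive_iff]; intro t _; exact Or.inl rfl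

theorem alive_symm {x y s : ℕ} (h : aliveB R x y s = true) : aliveB R y x s = true := by
  rw [alive_iff] at h ⊢
  intro t ht
  rcases h t ht with h1 | ⟨h1, h2⟩
  · exact Or.inl h1.symm
  · exact Or.inr ⟨h2, h1⟩

theorem alive_mono {x y s s' : ℕ} (hs : s' ≤ s) (h : aliveB R x y s = true) :
    aliveB R x y s' = true := by
  rw [alive_iff] at h ⊢
  intro t ht; exact h t (le_trans ht hs)

/-- Bool transitivity test on the window `[0,m]` at stage `s`. -/
def tranB (m s : ℕ) : Bool :=
  ball (fun x => ball (fun y => ball (fun z =>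
    (!(aliveB R x y s) || ((!(aliveB R y z s)) || aliveB R x z s))) m) m) m

private theorem bor_imp (a b c : Bool) :
    ((!a) || ((!b) || c)) = true ↔ (a = true → b = true → c = true) := by
  cases a <;> cases b <;> cases c <;> simp

theorem tranB_iff {m s : ℕ} :
    tranB R m s = true ↔ ∀ x, x ≤ m → ∀ y, y ≤ m → ∀ z, z ≤ m →
      aliveB R x y s = true → aliveB R y z s = true → aliveB R x z s = true := by
  unfold tranB
  rw [ball_iff]
  constructor
  · intro h x hx y hy z hz
    have hx' := h x hx
    rw [ball_iff] at hx'
    have hy' := hx' y hy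
    rw [ball_iff] at hy'
    have hz' := hy' z hz
    rw [bor_imp] at hz'
    exact hz'
  · intro h x hx
    rw [ball_iff]
    intro y hy
    rw [ball_iff]
    intro z hz
    rw [bor_imp]
    exact h x hx y hy z hz

/-- the predicate whose least witness is the stage `T m`. -/
def predT (m s : ℕ) : Bool := decide (m ≤ s) && tranB R m s

theorem tranB_weaken {m m' s : ℕ} (h : m ≤ m') (ht : tranB R m' s = true) :
    tranB R m s = true := by
  rw [tranB_iff] at ht ⊢
  intro x hx y hy z hz
  exact ht x (le_trans hx h) y (le_trans hy h) z (le_trans hz h)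

section WithE

variable {E : ℕ → ℕ → Prop}

theorem alive_of_E (hRE : ∀ x y, E x y ↔ ∀ t, R x y t = true)
    (hEq : Equivalence E) {x y : ℕ} (h : E x y) (s : ℕ) : aliveB R x y s = true := by
  rw [alive_iff]
  intro t _
  exact Or.inr ⟨(hRE x y).mp h t, (hRE y x).mp (hEq.symm h) t⟩

theorem dead_of_notE (hRE : ∀ x y, E x y ↔ ∀ t, R x y t = true)
    (hEq : Equivalence E) {x y : ℕ} (h : ¬E x y) :
    ∃ d, ∀ s, d ≤ s → aliveB R x y s = false := by
  have hxy : x ≠ y := by rintro rfl; exact h (hEq.refl x)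
  have : ¬∀ t, R x y t = true := fun hall => h ((hRE x y).mpr hall)
  push_neg at this
  obtain ⟨t, ht⟩ := this
  refine ⟨t, fun s hs => ?_⟩
  by_contra hcon
  have halive : aliveB R x y s = true := by
    cases hh : aliveB R x y s
    · exact absurd hh hcon
    · rfl
  rw [alive_iff] at halive
  rcases halive t hs with h1 | ⟨h1, _⟩
  · exact hxy h1
  · exact ht h1

theorem settle (hRE : ∀ x y, E x y ↔ ∀ t, R x y t = true)
    (hEq : Equivalence E) (m : ℕ) : ∃ s0, ∀ s, s0 ≤ s → ∀ x, x ≤ m → ∀ y, y ≤ m →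
    (aliveB R x y s = true ↔ E x y) := by
  have hpair : ∀ x y : ℕ, ∃ d, ∀ s, d ≤ s → (aliveB R x y s = true ↔ E x y) := by
    intro x y
    by_cases h : E x y
    · exact ⟨0, fun s _ => ⟨fun _ => h, fun _ => alive_of_E R hRE hEq h s⟩⟩
    · obtain ⟨d, hd⟩ := dead_of_notE R hRE hEq h
      refine ⟨d, fun s hs => ⟨fun ha => ?_, fun he => absurd he h⟩⟩
      rw [hd s hs] at ha; exact absurd ha (by simp)
  classical
  choose d hd using hpair
  refine ⟨(Finset.range (m+1) ×ˢ Finset.range (m+1)).sup (fun p => d p.1 p.2),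
    fun s hs x hx y hy => ?_⟩
  apply hd x y
  refine le_trans ?_ hs
  have hmem : (x, y) ∈ Finset.range (m+1) ×ˢ Finset.range (m+1) := by
    simp [Finset.mem_product, Nat.lt_succ_iff, hx, hy]
  exact Finset.le_sup (f := fun p => d p.1 p.2) hmem

theorem predT_ex (hRE : ∀ x y, E x y ↔ ∀ t, R x y t = true)
    (hEq : Equivalence E) (m : ℕ) : ∃ s, predT R m s = true := by
  obtain ⟨s0, hs0⟩ := settle R hRE hEq m
  refine ⟨max m s0, ?_⟩
  unfold predT
  rw [Bool.and_eq_true, decide_eq_true_eq]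
  refine ⟨le_max_left _ _, ?_⟩
  rw [tranB_iff]
  intro x hx y hy z hz h1 h2
  have e1 := (hs0 _ (le_max_right _ _) x hx y hy).mp h1
  have e2 := (hs0 _ (le_max_right _ _) y hy z hz).mp h2
  exact (hs0 _ (le_max_right _ _) x hx z hz).mpr (hEq.trans e1 e2)

end WithE

section WithT

variable (hTex : ∀ m, ∃ s, predT R m s = true)

/-- the canonical "transitive" stage for the window `[0,m]`. -/
def T (m : ℕ) : ℕ := Nat.find (hTex m)

theorem T_pred (m : ℕ) : predT R m (T R hTex m) = true := Nat.find_spec (hTex m)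

theorem T_ge (m : ℕ) : m ≤ T R hTex m := by
  have := T_pred R hTex m
  unfold predT at this
  rw [Bool.and_eq_true, decide_eq_true_eq] at this
  exact this.1

theorem T_tran (m : ℕ) : tranB R m (T R hTex m) = true := by
  have := T_pred R hTex m
  unfold predT at this
  rw [Bool.and_eq_true] at this
  exact this.2

theorem T_trans {m x y z : ℕ} (hx : x ≤ m) (hy : y ≤ m) (hz : z ≤ m)
    (h1 : aliveB R x y (T R hTex m) = true) (h2 : aliveB R y z (T R hTex m) = true) :
    aliveB R x z (T R hTex m) = true := by
  have := T_tran R hTex m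
  rw [tranB_iff] at this
  exact this x hx y hy z hz h1 h2

theorem T_mono {m m' : ℕ} (h : m ≤ m') : T R hTex m ≤ T R hTex m' := by
  apply Nat.find_min'
  unfold predT
  rw [Bool.and_eq_true, decide_eq_true_eq]
  exact ⟨le_trans h (T_ge R hTex m'), tranB_weaken R h (T_tran R hTex m')⟩

theorem gmin_ex (v m : ℕ) : ∃ u, aliveB R v u (T R hTex m) = true :=
  ⟨v, alive_refl R v _⟩

/-- least apparent equivalent of `v` in the window at stage `T m`. -/
def gmin (v m : ℕ) : ℕ := Nat.find (gmin_ex R hTex v m)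

theorem gmin_le (v m : ℕ) : gmin R hTex v m ≤ v :=
  Nat.find_min' _ (alive_refl R v _)

theorem gmin_spec (v m : ℕ) : aliveB R v (gmin R hTex v m) (T R hTex m) = true :=
  Nat.find_spec (gmin_ex R hTex v m)

theorem gmin_min {v m u : ℕ} (h : aliveB R v u (T R hTex m) = true) :
    gmin R hTex v m ≤ u := Nat.find_min' _ h

/-- (F2): apparently-equivalent points in the window share their `gmin`. -/
theorem F2 {v u m : ℕ} (hv : v ≤ m) (hu : u ≤ m)
    (h : aliveB R v u (T R hTex m) = true) : gmin R hTex v m = gmin R hTex u m := by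
  apply le_antisymm
  · apply gmin_min
    exact T_trans R hTex hv hu (le_trans (gmin_le R hTex u m) hu) h (gmin_spec R hTex u m)
  · apply gmin_min
    exact T_trans R hTex hu hv (le_trans (gmin_le R hTex v m) hv) (alive_symm R h)
      (gmin_spec R hTex v m)

/-- (F3): one-step downward compatibility of `gmin`. -/
theorem F3 {v m : ℕ} (hvm : v ≤ m) :
    gmin R hTex (gmin R hTex v (m+1)) m = gmin R hTex v m := by
  have h1 : aliveB R v (gmin R hTex v (m+1)) (T R hTex (m+1)) = true :=
    gmin_spec R hTex v (m+1)
  have h2 : aliveB R v (gmin R hTex v (m+1)) (T R hTex m) = true :=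
    alive_mono R (T_mono R hTex (Nat.le_succ m)) h1
  exact (F2 R hTex hvm (le_trans (gmin_le R hTex v (m+1)) hvm) h2).symm

/-- (F4): downward identity along candidate tracks. -/
theorem F4 {v b m : ℕ} (hvb : v ≤ b) (hvm : v ≤ m) (hmb : m ≤ b) :
    gmin R hTex (gmin R hTex v b) m = gmin R hTex v m := by
  suffices h : ∀ k m', v ≤ m' → m' + k = b →
      gmin R hTex (gmin R hTex v b) m' = gmin R hTex v m' by
    exact h (b - m) m hvm (by omega)
  intro k
  induction k with
  | zero =>
    intro m' hvm' hk
    have hmb' : m' = b := by omega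
    subst hmb'
    exact (F2 R hTex hvb (le_trans (gmin_le R hTex v m') hvb)
      (gmin_spec R hTex v m')).symm
  | succ k ih =>
    intro m' hvm' hk
    have ihm : gmin R hTex (gmin R hTex v b) (m'+1) = gmin R hTex v (m'+1) :=
      ih (m'+1) (by omega) (by omega)
    have hu : gmin R hTex v b ≤ m' := le_trans (gmin_le R hTex v b) hvm'
    calc gmin R hTex (gmin R hTex v b) m'
        = gmin R hTex (gmin R hTex (gmin R hTex v b) (m'+1)) m' := (F3 R hTex hu).symm
      _ = gmin R hTex (gmin R hTex v (m'+1)) m' := by rw [ihm]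
      _ = gmin R hTex v m' := F3 R hTex hvm'

/-- the one-step "chase" function at column `n`. -/
def stf (n w : ℕ) : ℕ :=
  if w ≤ n then w else if gmin R hTex w w = w then w else gmin R hTex w w

theorem stf_le (n w : ℕ) : stf R hTex n w ≤ w := by
  unfold stf
  split
  · exact le_refl w
  · split
    · exact le_refl w
    · exact gmin_le R hTex w w

theorem stf_lt {n w : ℕ} (h : stf R hTex n w ≠ w) : stf R hTex n w < w :=
  lt_of_le_of_ne (stf_le R hTex n w) h

theorem stab (n : ℕ) : ∀ w, stf R hTex n ((stf R hTex n)^[w] w) = (stf R hTex n)^[w] w := by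
  intro w
  induction w using Nat.strong_induction_on with
  | _ w ih =>
    by_cases h : stf R hTex n w = w
    · rw [Function.iterate_fixed h]; exact h
    · have hr : stf R hTex n w < w := stf_lt R hTex h
      obtain ⟨w', rfl⟩ : ∃ w', w = w' + 1 := ⟨w - 1, by omega⟩
      set r := stf R hTex n (w' + 1) with hrdef
      have hpast : ∀ j, (stf R hTex n)^[r + j] r = (stf R hTex n)^[r] r := by
        intro j
        induction j with
        | zero => rfl
        | succ j ihj =>
          have hrj : r + (j + 1) = (r + j) + 1 := by omega
          rw [hrj, Function.iterate_succ_apply', ihj, ih r hr]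
      have hiter : (stf R hTex n)^[w' + 1] (w' + 1) = (stf R hTex n)^[r] r := by
        rw [Function.iterate_succ_apply, ← hrdef]
        have hw' : w' = r + (w' - r) := by omega
        rw [hw', hpast]
      rw [hiter]
      exact ih r hr

theorem iterate_past (n w j : ℕ) :
    (stf R hTex n)^[w + j] w = (stf R hTex n)^[w] w := by
  induction j with
  | zero => rfl
  | succ j ihj =>
    have : w + (j + 1) = (w + j) + 1 := by omega
    rw [this, Function.iterate_succ_apply', ihj, stab]

/-- the chase iterated to stability. -/
def W (v n : ℕ) : ℕ := (stf R hTex n)^[v] v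

/-- the column function. -/
def G (v n : ℕ) : ℕ :=
  if W R hTex v n ≤ n then gmin R hTex (W R hTex v n) n else W R hTex v n

theorem EQ1 {v n : ℕ} (h : v ≤ n) : G R hTex v n = gmin R hTex v n := by
  have hst : stf R hTex n v = v := if_pos h
  have hW : W R hTex v n = v := Function.iterate_fixed hst v
  unfold G
  rw [hW, if_pos h]

theorem EQ2 {v n : ℕ} (h1 : n < v) (h2 : gmin R hTex v v = v) : G R hTex v n = v := by
  have hst : stf R hTex n v = v := by
    unfold stf
    rw [if_neg (by omega), if_pos h2]
  have hW : W R hTex v n = v := Function.iterate_fixed hst v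
  unfold G
  rw [hW, if_neg (by omega)]

theorem EQ3 {v n : ℕ} (h1 : n < v) (h2 : gmin R hTex v v ≠ v) :
    G R hTex v n = G R hTex (gmin R hTex v v) n := by
  have hrv : gmin R hTex v v < v := lt_of_le_of_ne (gmin_le R hTex v v) h2
  obtain ⟨v', rfl⟩ : ∃ v', v = v' + 1 := ⟨v - 1, by omega⟩
  set r := gmin R hTex (v' + 1) (v' + 1) with hrdef
  have hst : stf R hTex n (v' + 1) = r := by
    unfold stf
    rw [if_neg (by omega), if_neg h2]
  have hW : W R hTex (v' + 1) n = W R hTex r n := by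
    unfold W
    rw [Function.iterate_succ_apply, hst]
    have hv' : v' = r + (v' - r) := by omega
    rw [hv', iterate_past]
  unfold G
  rw [hW]

/-- Claim A: the column stream is constant along `gmin`-candidates. -/
theorem claimA : ∀ v b n : ℕ, v ≤ b → n < b →
    G R hTex (gmin R hTex v b) n = G R hTex v n := by
  intro v
  induction v using Nat.strong_induction_on with
  | _ v ih =>
    intro b n hvb hnb
    set u := gmin R hTex v b with hudef
    rcases eq_or_lt_of_le (gmin_le R hTex v b) with hu | hu
    · rw [hudef, hu]
    · rcases Nat.lt_or_ge n v with hnv | hnv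
      · -- n < v
        have hruv : gmin R hTex u v = gmin R hTex v v := F4 R hTex hvb (le_refl v) hvb
        have hrv : gmin R hTex v v ≠ v := by
          intro hcon
          rw [hcon] at hruv
          have : gmin R hTex u v ≤ u := gmin_le R hTex u v
          omega
        set r := gmin R hTex v v with hrdef
        have e1 : G R hTex v n = G R hTex r n := EQ3 R hTex hnv hrv
        have e2 : G R hTex u n = G R hTex r n := by
          have := ih u hu v n (le_of_lt hu) hnv
          rw [hruv] at this
          exact this.symm
        rw [e1, e2]
      · -- v ≤ n < b
        have e1 : G R hTex v n = gmin R hTex v n := EQ1 R hTex hnv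
        have e2 : G R hTex u n = gmin R hTex u n := EQ1 R hTex (le_trans (le_of_lt hu) hnv)
        rw [e1, e2]
        exact F4 R hTex hvb hnv (le_of_lt hnb)

section FinalMath

variable {E : ℕ → ℕ → Prop}

/-- invariance: equivalent points have identical columns. -/
theorem claimB (hRE : ∀ x y, E x y ↔ ∀ t, R x y t = true)
    (hEq : Equivalence E) {x y : ℕ} (hxy : x < y) (hE : E x y) :
    ∀ n, G R hTex x n = G R hTex y n := by
  intro n
  have halive : ∀ m, aliveB R x y (T R hTex m) = true :=
    fun m => alive_of_E R hRE hEq hE _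
  rcases Nat.lt_or_ge n y with hny | hny
  · -- n < y
    have hq : gmin R hTex x y = gmin R hTex y y :=
      F2 R hTex (le_of_lt hxy) (le_refl y) (halive y)
    have hqx : gmin R hTex y y ≤ x := by
      rw [← hq]; exact gmin_le R hTex x y
    have hqy : gmin R hTex y y ≠ y := by omega
    have e1 : G R hTex y n = G R hTex (gmin R hTex y y) n := EQ3 R hTex hny hqy
    have e2 : G R hTex (gmin R hTex x y) n = G R hTex x n :=
      claimA R hTex x y n (le_of_lt hxy) hny
    rw [e1, ← hq, e2]
  · -- y ≤ n
    have e1 : G R hTex x n = gmin R hTex x n := EQ1 R hTex (le_trans (le_of_lt hxy) hny)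
    have e2 : G R hTex y n = gmin R hTex y n := EQ1 R hTex hny
    rw [e1, e2]
    exact F2 R hTex (le_trans (le_of_lt hxy) hny) hny (halive n)

/-- completeness: non-equivalent points differ in some column. -/
theorem complete (hRE : ∀ x y, E x y ↔ ∀ t, R x y t = true)
    (hEq : Equivalence E) {x y : ℕ} (hxy : x < y) (hnE : ¬E x y) :
    ∃ n, G R hTex x n ≠ G R hTex y n := by
  obtain ⟨d, hd⟩ := dead_of_notE R hRE hEq hnE
  refine ⟨max y d, ?_⟩
  set n := max y d with hndef
  have hxn : x ≤ n := le_trans (le_of_lt hxy) (le_max_left _ _)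
  have hyn : y ≤ n := le_max_left _ _
  have e1 : G R hTex x n = gmin R hTex x n := EQ1 R hTex hxn
  have e2 : G R hTex y n = gmin R hTex y n := EQ1 R hTex hyn
  rw [e1, e2]
  intro hcon
  have h1 : aliveB R x (gmin R hTex x n) (T R hTex n) = true := gmin_spec R hTex x n
  have h2 : aliveB R y (gmin R hTex y n) (T R hTex n) = true := gmin_spec R hTex y n
  rw [← hcon] at h2
  have hun : gmin R hTex x n ≤ n := le_trans (gmin_le R hTex x n) hxn
  have hxy' : aliveB R x y (T R hTex n) = true :=
    T_trans R hTex hxn hun hyn h1 (alive_symm R h2)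
  have hdead : aliveB R x y (T R hTex n) = false :=
    hd _ (le_trans (le_max_right y d) (T_ge R hTex n))
  rw [hxy'] at hdead
  exact absurd hdead (by simp)

theorem main_iff (hRE : ∀ x y, E x y ↔ ∀ t, R x y t = true)
    (hEq : Equivalence E) : ∀ x y, E x y ↔ ∀ n, G R hTex x n = G R hTex y n := by
  intro x y
  constructor
  · intro hE
    rcases lt_trichotomy x y with h | h | h
    · exact claimB R hTex hRE hEq h hE
    · rw [h]; intro n; rfl
    · intro n; exact (claimB R hTex hRE hEq h (hEq.symm hE) n).symm
  · intro hcol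
    by_contra hnE
    rcases lt_trichotomy x y with h | h | h
    · obtain ⟨n, hn⟩ := complete R hTex hRE hEq h hnE
      exact hn (hcol n)
    · rw [h] at hnE; exact hnE (hEq.refl y)
    · have hnE' : ¬E y x := fun hc => hnE (hEq.symm hc)
      obtain ⟨n, hn⟩ := complete R hTex hRE hEq h hnE'
      exact hn (hcol n).symm

end FinalMath

section Comp

open Computable

theorem R_comp (hRc : Computable fun p : ℕ × ℕ × ℕ => R p.1 p.2.1 p.2.2)
    {α : Type*} [Primcodable α] {x y t : α → ℕ}
    (hx : Computable x) (hy : Computable y) (ht : Computable t) :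
    Computable fun a => R (x a) (y a) (t a) :=
  hRc.comp (hx.pair (hy.pair ht))

theorem alive_comp (hRc : Computable fun p : ℕ × ℕ × ℕ => R p.1 p.2.1 p.2.2)
    {α : Type*} [Primcodable α] {x y s : α → ℕ}
    (hx : Computable x) (hy : Computable y) (hs : Computable s) :
    Computable fun a => aliveB R (x a) (y a) (s a) := by
  have h1 : Computable fun q : α × ℕ => decide (x q.1 = y q.1) :=
    Primrec.eq.decide.to_comp.comp (hx.comp Computable.fst) (hy.comp Computable.fst)
  have h2 : Computable fun q : α × ℕ => R (x q.1) (y q.1) q.2 :=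
    R_comp R hRc (hx.comp Computable.fst) (hy.comp Computable.fst) Computable.snd
  have h3 : Computable fun q : α × ℕ => R (y q.1) (x q.1) q.2 :=
    R_comp R hRc (hy.comp Computable.fst) (hx.comp Computable.fst) Computable.snd
  have hp : Computable fun q : α × ℕ =>
      (decide (x q.1 = y q.1) || (R (x q.1) (y q.1) q.2 && R (y q.1) (x q.1) q.2)) :=
    (Primrec.dom_bool₂ (· || ·)).to_comp.comp h1
      ((Primrec.dom_bool₂ (· && ·)).to_comp.comp h2 h3)
  exact ball_comp hp.to₂ hs

theorem tranB_comp (hRc : Computable fun p : ℕ × ℕ × ℕ => R p.1 p.2.1 p.2.2)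
    {α : Type*} [Primcodable α] {m s : α → ℕ}
    (hm : Computable m) (hs : Computable s) :
    Computable fun a => tranB R (m a) (s a) := by
  have hnot : Computable₂ fun (a b : Bool) => (!a || b) :=
    (Primrec.dom_bool₂ _).to_comp
  have aproj : Computable fun w : ((α × ℕ) × ℕ) × ℕ => w.1.1.1 :=
    Computable.fst.comp (Computable.fst.comp Computable.fst)
  have xproj : Computable fun w : ((α × ℕ) × ℕ) × ℕ => w.1.1.2 :=
    Computable.snd.comp (Computable.fst.comp Computable.fst)
  have yproj : Computable fun w : ((α × ℕ) × ℕ) × ℕ => w.1.2 :=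
    Computable.snd.comp Computable.fst
  have zproj : Computable fun w : ((α × ℕ) × ℕ) × ℕ => w.2 := Computable.snd
  have c1 : Computable fun w : ((α × ℕ) × ℕ) × ℕ =>
      aliveB R w.1.1.2 w.1.2 (s w.1.1.1) :=
    alive_comp R hRc xproj yproj (hs.comp aproj)
  have c2 : Computable fun w : ((α × ℕ) × ℕ) × ℕ =>
      aliveB R w.1.2 w.2 (s w.1.1.1) :=
    alive_comp R hRc yproj zproj (hs.comp aproj)
  have c3 : Computable fun w : ((α × ℕ) × ℕ) × ℕ =>
      aliveB R w.1.1.2 w.2 (s w.1.1.1) :=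
    alive_comp R hRc xproj zproj (hs.comp aproj)
  have hp3 : Computable₂ fun (q : (α × ℕ) × ℕ) (z : ℕ) =>
      ((!(aliveB R q.1.2 q.2 (s q.1.1))) ||
        ((!(aliveB R q.2 z (s q.1.1))) || aliveB R q.1.2 z (s q.1.1))) :=
    hnot.comp c1 (hnot.comp c2 c3)
  have h3 : Computable fun q : (α × ℕ) × ℕ =>
      ball (fun z => ((!(aliveB R q.1.2 q.2 (s q.1.1))) ||
        ((!(aliveB R q.2 z (s q.1.1))) || aliveB R q.1.2 z (s q.1.1)))) (m q.1.1) :=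
    ball_comp hp3 (hm.comp (Computable.fst.comp Computable.fst))
  have h2 : Computable fun q : α × ℕ =>
      ball (fun y => ball (fun z => ((!(aliveB R q.2 y (s q.1))) ||
        ((!(aliveB R y z (s q.1))) || aliveB R q.2 z (s q.1)))) (m q.1)) (m q.1) :=
    ball_comp h3.to₂ (hm.comp Computable.fst)
  exact ball_comp h2.to₂ hm

theorem predT_comp (hRc : Computable fun p : ℕ × ℕ × ℕ => R p.1 p.2.1 p.2.2) :
    Computable₂ (predT R) := by
  have : Computable fun p : ℕ × ℕ => (decide (p.1 ≤ p.2) && tranB R p.1 p.2) :=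
    (Primrec.dom_bool₂ (· && ·)).to_comp.comp
      (Primrec.nat_le.decide.to_comp.comp Computable.fst Computable.snd)
      (tranB_comp R hRc Computable.fst Computable.snd)
  exact this

theorem T_comp (hRc : Computable fun p : ℕ × ℕ × ℕ => R p.1 p.2.1 p.2.2) :
    Computable (T R hTex) := by
  have hpart : Partrec fun m => Nat.rfind fun s => ((predT R m s : Bool) : Part Bool) :=
    Partrec.rfind (predT_comp R hRc).partrec₂
  apply hpart.of_eq_tot
  intro m
  apply Nat.mem_rfind.mpr
  constructor
  · exact Part.mem_some_iff.mpr (T_pred R hTex m).symm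
  · intro k hk
    apply Part.mem_some_iff.mpr
    have h := Nat.find_min (hTex m) hk
    revert h
    cases predT R m k <;> simp

theorem gmin_comp (hRc : Computable fun p : ℕ × ℕ × ℕ => R p.1 p.2.1 p.2.2) :
    Computable₂ (gmin R hTex) := by
  have hp : Computable₂ fun (p : ℕ × ℕ) (u : ℕ) => aliveB R p.1 u (T R hTex p.2) :=
    alive_comp R hRc (Computable.fst.comp Computable.fst) Computable.snd
      ((T_comp R hTex hRc).comp (Computable.snd.comp Computable.fst))
  have hpart : Partrec fun p : ℕ × ℕ =>
      Nat.rfind fun u => ((aliveB R p.1 u (T R hTex p.2) : Bool) : Part Bool) :=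
    Partrec.rfind hp.partrec₂
  apply Computable₂.mk
  apply hpart.of_eq_tot
  intro p
  apply Nat.mem_rfind.mpr
  constructor
  · exact Part.mem_some_iff.mpr (gmin_spec R hTex p.1 p.2).symm
  · intro k hk
    apply Part.mem_some_iff.mpr
    have h := Nat.find_min (gmin_ex R hTex p.1 p.2) hk
    revert h
    cases aliveB R p.1 k (T R hTex p.2) <;> simp

theorem stf_comp (hRc : Computable fun p : ℕ × ℕ × ℕ => R p.1 p.2.1 p.2.2) :
    Computable₂ (stf R hTex) := by
  have hg := gmin_comp R hTex hRc
  have hgw : Computable fun p : ℕ × ℕ => gmin R hTex p.2 p.2 :=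
    hg.comp Computable.snd Computable.snd
  have hc : Computable fun p : ℕ × ℕ =>
      cond (decide (p.2 ≤ p.1)) p.2
        (cond (decide (gmin R hTex p.2 p.2 = p.2)) p.2 (gmin R hTex p.2 p.2)) := by
    apply Computable.cond
    · exact Primrec.nat_le.decide.to_comp.comp Computable.snd Computable.fst
    · exact Computable.snd
    · apply Computable.cond
      · exact Primrec.eq.decide.to_comp.comp hgw Computable.snd
      · exact Computable.snd
      · exact hgw
  apply Computable₂.mk
  apply hc.of_eq
  intro p
  simp only [Bool.cond_decide]
  rfl

theorem W_rec (v n : ℕ) : ∀ k : ℕ,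
    (Nat.rec v (fun _ IH => stf R hTex n IH) k : ℕ) = (stf R hTex n)^[k] v := by
  intro k
  induction k with
  | zero => rfl
  | succ k ih =>
    show stf R hTex n (Nat.rec v (fun _ IH => stf R hTex n IH) k) = _
    rw [ih, Function.iterate_succ_apply']

theorem W_comp (hRc : Computable fun p : ℕ × ℕ × ℕ => R p.1 p.2.1 p.2.2) :
    Computable₂ (W R hTex) := by
  have hh : Computable₂ fun (p : ℕ × ℕ) (q : ℕ × ℕ) => stf R hTex p.2 q.2 :=
    ((stf_comp R hTex hRc).comp (Computable.snd.comp Computable.fst)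
      (Computable.snd.comp Computable.snd)).to₂
  have hrec : Computable fun p : ℕ × ℕ =>
      (Nat.rec p.1 (fun y IH => stf R hTex p.2 IH) p.1 : ℕ) :=
    Computable.nat_rec Computable.fst Computable.fst hh
  apply Computable₂.mk
  apply hrec.of_eq
  intro p
  exact W_rec R hTex p.1 p.2 p.1

theorem G_comp (hRc : Computable fun p : ℕ × ℕ × ℕ => R p.1 p.2.1 p.2.2) :
    Computable₂ (G R hTex) := by
  have hW := W_comp R hTex hRc
  have hWc : Computable fun p : ℕ × ℕ => W R hTex p.1 p.2 :=
    hW.comp Computable.fst Computable.snd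
  have hgm : Computable fun p : ℕ × ℕ => gmin R hTex (W R hTex p.1 p.2) p.2 :=
    (gmin_comp R hTex hRc).comp hWc Computable.snd
  have hc : Computable fun p : ℕ × ℕ =>
      cond (decide (W R hTex p.1 p.2 ≤ p.2))
        (gmin R hTex (W R hTex p.1 p.2) p.2) (W R hTex p.1 p.2) := by
    apply Computable.cond
    · exact Primrec.nat_le.decide.to_comp.comp hWc Computable.snd
    · exact hgm
    · exact hWc
  apply Computable₂.mk
  apply hc.of_eq
  intro p
  simp only [Bool.cond_decide]
  rfl

end Comp

end WithT

end Main

end Stmt3Aux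


/-- A binary relation on ℕ is Π⁰₁. -/
def Pi01Rel (E : ℕ → ℕ → Prop) : Prop :=
  ∃ R : ℕ → ℕ → ℕ → Bool,
    Computable (fun p : ℕ × ℕ × ℕ => R p.1 p.2.1 p.2.2) ∧
    ∀ x y, E x y ↔ ∀ t, R x y t = true

/-- Every Π⁰₁ equivalence relation is the relation of equality of the columns
of a computable binary function. -/
theorem stmt_3 (E : ℕ → ℕ → Prop) (hE : Pi01Rel E) (hEquiv : Equivalence E) :
    ∃ f : ℕ → ℕ → ℕ, Computable₂ f ∧ ∀ x y, E x y ↔ ∀ n, f x n = f y n := by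
  obtain ⟨R, hRc, hRE⟩ := hE
  have hTex : ∀ m, ∃ s, Stmt3Aux.predT R m s = true :=
    Stmt3Aux.predT_ex R hRE hEquiv
  exact ⟨Stmt3Aux.G R hTex, Stmt3Aux.G_comp R hTex hRc,
    Stmt3Aux.main_iff R hTex hRE hEquiv⟩
end

section
/- Let S ⊆ ℕ be recursively enumerable and not computable. Then the equivalence relation E on ℕ with the two classes S and ℕ \ S, i.e. E x y ↔ (x ∈ S ↔ y ∈ S), is not effectively Π⁰₂. -/
/-- The `e`-th computably enumerable set: the domain of the `e`-th partial
computable function under the standard numbering. -/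
def W (e : ℕ) : Set ℕ :=
  {n | ((Denumerable.ofNat Nat.Partrec.Code e).eval n).Dom}

/-- An equivalence relation on ℕ is effectively Π⁰₂. -/
def EffectivelyPi02 (E : ℕ → ℕ → Prop) : Prop :=
  ∃ h : ℕ → ℕ, Computable h ∧
    (∀ n, Equivalence (fun x y => Nat.pair x y ∈ W (h n))) ∧
    ∀ x y, E x y ↔ ∀ n, Nat.pair x y ∈ W (h n)

lemma W_re (e b : ℕ) : REPred fun x => Nat.pair x b ∈ W e := by
  have : Partrec fun x : ℕ => (Denumerable.ofNat Nat.Partrec.Code e).eval (Nat.pair x b) :=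
    Nat.Partrec.Code.eval_part.comp (Computable.const _)
      (Primrec.to_comp (Primrec₂.natPair.comp .id (Primrec.const b)))
  exact this.dom_re

/-- If `S` is r.e. and not computable, the equivalence relation with classes
`S` and `ℕ \ S` is not effectively Π⁰₂. -/
theorem stmt_9 (S : Set ℕ) (hre : REPred (fun n => n ∈ S))
    (hnc : ¬ ComputablePred (fun n => n ∈ S)) :
    ¬ EffectivelyPi02 (fun x y => (x ∈ S ↔ y ∈ S)) := by
  classical
  rintro ⟨h, -, heq, hiff⟩
  -- S nonempty and co-nonempty
  obtain ⟨a, ha⟩ : ∃ a, a ∈ S := by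
    by_contra hne
    push_neg at hne
    exact hnc (ComputablePred.computable_iff.2 ⟨fun _ => false, Computable.const false,
      funext fun n => by simp [hne n]⟩)
  obtain ⟨b, hb⟩ : ∃ b, b ∉ S := by
    by_contra hne
    push_neg at hne
    exact hnc (ComputablePred.computable_iff.2 ⟨fun _ => true, Computable.const true,
      funext fun n => by simp [hne n]⟩)
  have hab : ¬ (∀ n, Nat.pair a b ∈ W (h n)) := fun H => hb ((hiff a b).2 H |>.1 ha)
  push_neg at hab
  obtain ⟨n, hn⟩ := hab
  -- F := F_n separates S from its complement
  set F : ℕ → ℕ → Prop := fun x y => Nat.pair x y ∈ W (h n) with hF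
  have hE := heq n
  have hsub : ∀ x y, (x ∈ S ↔ y ∈ S) → F x y := fun x y hxy => (hiff x y).1 hxy n
  have key : ∀ x, x ∈ S ↔ F x a := by
    intro x
    constructor
    · intro hx; exact hsub x a (by simp [hx, ha])
    · intro hxa
      by_contra hx
      exact hn (hE.trans (hE.symm hxa) (hsub x b (by simp [hx, hb])))
  have key' : ∀ x, x ∉ S ↔ F x b := by
    intro x
    constructor
    · intro hx; exact hsub x b (by simp [hx, hb])
    · intro hxb hx
      exact hn (hE.trans (hE.symm ((key x).1 hx)) hxb)
  exact hnc (ComputablePred.computable_iff_re_compl_re'.2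
    ⟨(W_re (h n) a).of_eq fun x => (key x).symm,
     (W_re (h n) b).of_eq fun x => (key' x).symm⟩)
end

section
/- There exists an effectively Π⁰₂ equivalence relation U on ℕ such that every effectively Π⁰₂ equivalence relation E on ℕ is computably reducible to U. -/
open Nat.Partrec.Code

namespace Stmt10Aux

/-- The c.e. set coded by applying (code of) `e` to `n` to get an index. -/
def S (e n : ℕ) : Set ℕ :=
  {m | (((Denumerable.ofNat Nat.Partrec.Code e).eval n).bind
      fun i => (Denumerable.ofNat Nat.Partrec.Code i).eval m).Dom}

def stepR (A : Set ℕ) (a b : ℕ) : Prop := Nat.pair a b ∈ A ∨ Nat.pair b a ∈ A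

def Clos (A : Set ℕ) : ℕ → ℕ → Prop := Relation.ReflTransGen (stepR A)

theorem clos_equiv (A : Set ℕ) : Equivalence (Clos A) :=
  ⟨fun _ => .refl,
   fun h => haveI : Std.Symm (stepR A) := ⟨fun _ _ h => Or.symm h⟩; (Relation.ReflTransGen.stdSymm (r := stepR A)).symm _ _ h,
   fun h1 h2 => h1.trans h2⟩

theorem clos_iff_of_equiv {A : Set ℕ} {F : ℕ → ℕ → Prop} (hF : Equivalence F)
    (h : ∀ a b, Nat.pair a b ∈ A ↔ F a b) (x y : ℕ) : Clos A x y ↔ F x y := by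
  constructor
  · intro hc
    induction hc with
    | refl => exact hF.refl x
    | tail _ hstep ih =>
      exact hF.trans ih (hstep.elim (fun h' => (h _ _).1 h') fun h' => hF.symm ((h _ _).1 h'))
  · intro hxy; exact Relation.ReflTransGen.single (Or.inl ((h x y).2 hxy))

def memB (e n s m : ℕ) : Bool :=
  ((evaln s (Denumerable.ofNat Nat.Partrec.Code e) n).bind
    fun i => evaln s (Denumerable.ofNat Nat.Partrec.Code i) m).isSome

theorem memB_mono {e n m s s'} (h : s ≤ s') (hm : memB e n s m = true) :
    memB e n s' m = true := by
  simp only [memB, Option.isSome_iff_exists, Option.bind_eq_some_iff] at hm ⊢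
  obtain ⟨v, i, h1, h2⟩ := hm
  exact ⟨v, i, evaln_mono h h1, evaln_mono h h2⟩

theorem memB_iff {e n m : ℕ} : m ∈ S e n ↔ ∃ s, memB e n s m = true := by
  constructor
  · intro hm
    rw [S, Set.mem_setOf_eq, Part.dom_iff_mem] at hm
    obtain ⟨b, hb⟩ := hm
    rw [Part.mem_bind_iff] at hb
    obtain ⟨i, hi, hbi⟩ := hb
    obtain ⟨s1, hs1⟩ := evaln_complete.1 hi
    obtain ⟨s2, hs2⟩ := evaln_complete.1 hbi
    refine ⟨max s1 s2, ?_⟩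
    have h1 := evaln_mono (le_max_left s1 s2) hs1
    have h2 := evaln_mono (le_max_right s1 s2) hs2
    simp only [memB, Option.isSome_iff_exists, Option.bind_eq_some_iff]
    exact ⟨b, i, h1, h2⟩
  · rintro ⟨s, hs⟩
    simp only [memB, Option.isSome_iff_exists, Option.bind_eq_some_iff] at hs
    obtain ⟨b, i, h1, h2⟩ := hs
    rw [S, Set.mem_setOf_eq, Part.dom_iff_mem]
    exact ⟨b, Part.mem_bind_iff.2 ⟨i, evaln_sound h1, evaln_sound h2⟩⟩

def stepB (e n s a b : ℕ) : Bool := memB e n s (Nat.pair a b) || memB e n s (Nat.pair b a)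

theorem stepB_mono {e n a b s s'} (h : s ≤ s') (hm : stepB e n s a b = true) :
    stepB e n s' a b = true := by
  simp only [stepB, Bool.or_eq_true] at hm ⊢
  exact hm.imp (memB_mono h) (memB_mono h)

theorem stepB_iff {e n a b : ℕ} : stepR (S e n) a b ↔ ∃ s, stepB e n s a b = true := by
  simp only [stepR, memB_iff, stepB, Bool.or_eq_true]
  constructor
  · rintro (⟨s, hs⟩ | ⟨s, hs⟩)
    · exact ⟨s, Or.inl hs⟩
    · exact ⟨s, Or.inr hs⟩
  · rintro ⟨s, hs | hs⟩
    · exact Or.inl ⟨s, hs⟩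
    · exact Or.inr ⟨s, hs⟩

theorem chain_stepB_iff {e n : ℕ} {x : ℕ} {L : List ℕ} :
    List.IsChain (stepR (S e n)) (x :: L) ↔ ∃ s, List.IsChain (fun a b => stepB e n s a b = true) (x :: L) := by
  constructor
  · intro h
    induction L generalizing x with
    | nil => exact ⟨0, List.Chain.nil⟩
    | cons b t ih =>
      rw [List.chain_cons] at h
      obtain ⟨s1, hs1⟩ := stepB_iff.1 h.1
      obtain ⟨s2, hs2⟩ := ih h.2
      refine ⟨max s1 s2, List.chain_cons.2 ⟨stepB_mono (le_max_left _ _) hs1, ?_⟩⟩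
      exact hs2.imp fun _ _ hab => stepB_mono (le_max_right _ _) hab
  · rintro ⟨s, hs⟩
    exact hs.imp fun _ _ hab => stepB_iff.2 ⟨s, hab⟩

def chkStep (e n s : ℕ) (st : ℕ × Bool) (b : ℕ) : ℕ × Bool := (b, st.2 && stepB e n s st.1 b)

def chk (e n s x y : ℕ) (L : List ℕ) : Bool :=
  let st := L.foldl (chkStep e n s) (x, true)
  st.2 && decide (st.1 = y)

theorem foldl_fst (e n s : ℕ) : ∀ (L : List ℕ) (x : ℕ) (ok : Bool),
    (L.foldl (chkStep e n s) (x, ok)).1 = (x :: L).getLast (List.cons_ne_nil _ _)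
  | [], x, ok => by simp [List.getLast]
  | b :: t, x, ok => by
    rw [List.foldl_cons, List.getLast_cons_cons]
    exact foldl_fst e n s t b _

theorem foldl_snd (e n s : ℕ) : ∀ (L : List ℕ) (x : ℕ) (ok : Bool),
    (L.foldl (chkStep e n s) (x, ok)).2
      = (ok && decide (List.IsChain (fun a b => stepB e n s a b = true) (x :: L)))
  | [], x, ok => by simp [List.Chain.nil]
  | b :: t, x, ok => by
    rw [List.foldl_cons]
    show (t.foldl (chkStep e n s) (b, ok && stepB e n s x b)).2 = _
    rw [foldl_snd e n s t b _]
    simp [List.chain_cons, Bool.and_assoc]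

theorem chk_iff {e n s x y : ℕ} {L : List ℕ} :
    chk e n s x y L = true ↔
      List.IsChain (fun a b => stepB e n s a b = true) (x :: L) ∧
        (x :: L).getLast (List.cons_ne_nil _ _) = y := by
  simp [chk, foldl_snd, foldl_fst, Bool.and_eq_true]

def Fu (n u v : ℕ) : Prop :=
  u.unpair.1 = v.unpair.1 ∧ Clos (S u.unpair.1 n) u.unpair.2 v.unpair.2

theorem fu_equiv (n : ℕ) : Equivalence (Fu n) := by
  constructor
  · exact fun u => ⟨rfl, (clos_equiv _).refl _⟩
  · rintro u v ⟨h1, h2⟩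
    refine ⟨h1.symm, ?_⟩
    rw [← h1]; exact (clos_equiv _).symm h2
  · rintro u v w ⟨h1, h2⟩ ⟨h3, h4⟩
    refine ⟨h1.trans h3, (clos_equiv _).trans h2 ?_⟩
    rw [h1]; exact h4

def ψb (k w : ℕ) : Bool :=
  decide (k.unpair.2.unpair.1.unpair.1 = k.unpair.2.unpair.2.unpair.1) &&
    chk k.unpair.2.unpair.1.unpair.1 k.unpair.1 w.unpair.1
      k.unpair.2.unpair.1.unpair.2 k.unpair.2.unpair.2.unpair.2
      (Denumerable.ofNat (List ℕ) w.unpair.2)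

theorem fu_iff_psib (n u v : ℕ) :
    Fu n u v ↔ ∃ w : ℕ, ψb (Nat.pair n (Nat.pair u v)) w = true := by
  constructor
  · rintro ⟨he, hc⟩
    obtain ⟨L, hL1, hL2⟩ := List.exists_isChain_cons_of_relationReflTransGen hc
    obtain ⟨s, hs⟩ := chain_stepB_iff.1 hL1
    refine ⟨Nat.pair s (Encodable.encode L), ?_⟩
    simp only [ψb, Nat.unpair_pair, Denumerable.ofNat_encode, Bool.and_eq_true,
      decide_eq_true_eq]
    exact ⟨he, chk_iff.2 ⟨hs, hL2⟩⟩
  · rintro ⟨w, hw⟩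
    simp only [ψb, Nat.unpair_pair, Bool.and_eq_true, decide_eq_true_eq] at hw
    obtain ⟨he, hch⟩ := hw
    obtain ⟨hc, hl⟩ := chk_iff.1 hch
    exact ⟨he, List.relationReflTransGen_of_exists_isChain_cons _ (chain_stepB_iff.2 ⟨_, hc⟩) hl⟩

theorem memB_prim : Primrec₂ fun (p : (ℕ × ℕ) × ℕ) (m : ℕ) => memB p.1.1 p.1.2 p.2 m := by
  have hofn : Primrec (Denumerable.ofNat Nat.Partrec.Code) := Primrec.ofNat _
  have hf : Primrec fun q : ((ℕ × ℕ) × ℕ) × ℕ =>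
      evaln q.1.2 (Denumerable.ofNat Nat.Partrec.Code q.1.1.1) q.1.1.2 :=
    primrec_evaln.comp <|
      ((Primrec.snd.comp Primrec.fst).pair
        (hofn.comp (Primrec.fst.comp (Primrec.fst.comp Primrec.fst)))).pair
        (Primrec.snd.comp (Primrec.fst.comp Primrec.fst))
  have hg : Primrec₂ fun (q : ((ℕ × ℕ) × ℕ) × ℕ) (i : ℕ) =>
      evaln q.1.2 (Denumerable.ofNat Nat.Partrec.Code i) q.2 :=
    primrec_evaln.comp <|
      (((Primrec.snd.comp (Primrec.fst.comp Primrec.fst)).pair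
        (hofn.comp Primrec.snd)).pair (Primrec.snd.comp Primrec.fst))
  exact (Primrec.option_isSome.comp (Primrec.option_bind hf hg)).to₂

private theorem hband : Primrec₂ (fun a b : Bool => a && b) :=
  (Primrec.cond Primrec.fst Primrec.snd (Primrec.const false)).of_eq fun p => by
    cases p.1 <;> rfl

private theorem hbor : Primrec₂ (fun a b : Bool => a || b) :=
  (Primrec.cond Primrec.fst (Primrec.const true) Primrec.snd).of_eq fun p => by
    cases p.1 <;> rfl

theorem stepB_prim : Primrec₂ fun (p : (ℕ × ℕ) × ℕ) (q : ℕ × ℕ) => stepB p.1.1 p.1.2 p.2 q.1 q.2 := by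
  have h1 : Primrec fun a : ((ℕ × ℕ) × ℕ) × ℕ × ℕ => memB a.1.1.1 a.1.1.2 a.1.2 (Nat.pair a.2.1 a.2.2) :=
    memB_prim.comp Primrec.fst
      (Primrec₂.natPair.comp (Primrec.fst.comp Primrec.snd) (Primrec.snd.comp Primrec.snd))
  have h2 : Primrec fun a : ((ℕ × ℕ) × ℕ) × ℕ × ℕ => memB a.1.1.1 a.1.1.2 a.1.2 (Nat.pair a.2.2 a.2.1) :=
    memB_prim.comp Primrec.fst
      (Primrec₂.natPair.comp (Primrec.snd.comp Primrec.snd) (Primrec.fst.comp Primrec.snd))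
  exact (hbor.comp h1 h2 : Primrec _)

theorem ψb_primrec : Primrec₂ ψb := by
  have hu : Primrec Nat.unpair := Primrec.unpair
  have pk : Primrec fun a : ℕ × ℕ => a.1 := Primrec.fst
  have pn : Primrec fun a : ℕ × ℕ => a.1.unpair.1 := Primrec.fst.comp (hu.comp pk)
  have pm : Primrec fun a : ℕ × ℕ => a.1.unpair.2 := Primrec.snd.comp (hu.comp pk)
  have puu : Primrec fun a : ℕ × ℕ => a.1.unpair.2.unpair.1 := Primrec.fst.comp (hu.comp pm)
  have pvv : Primrec fun a : ℕ × ℕ => a.1.unpair.2.unpair.2 := Primrec.snd.comp (hu.comp pm)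
  have pe : Primrec fun a : ℕ × ℕ => a.1.unpair.2.unpair.1.unpair.1 :=
    Primrec.fst.comp (hu.comp puu)
  have px : Primrec fun a : ℕ × ℕ => a.1.unpair.2.unpair.1.unpair.2 :=
    Primrec.snd.comp (hu.comp puu)
  have pv1 : Primrec fun a : ℕ × ℕ => a.1.unpair.2.unpair.2.unpair.1 :=
    Primrec.fst.comp (hu.comp pvv)
  have py : Primrec fun a : ℕ × ℕ => a.1.unpair.2.unpair.2.unpair.2 :=
    Primrec.snd.comp (hu.comp pvv)
  have ps : Primrec fun a : ℕ × ℕ => a.2.unpair.1 := Primrec.fst.comp (hu.comp Primrec.snd)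
  have pL : Primrec fun a : ℕ × ℕ => Denumerable.ofNat (List ℕ) a.2.unpair.2 :=
    (Primrec.ofNat _).comp (Primrec.snd.comp (hu.comp Primrec.snd))
  -- the fold computing chk
  have hfold : Primrec fun a : ℕ × ℕ =>
      (Denumerable.ofNat (List ℕ) a.2.unpair.2).foldl
        (chkStep a.1.unpair.2.unpair.1.unpair.1 a.1.unpair.1 a.2.unpair.1)
        (a.1.unpair.2.unpair.1.unpair.2, true) := by
    have hstep : Primrec fun q : (ℕ × ℕ) × (ℕ × Bool) × ℕ =>
        stepB q.1.1.unpair.2.unpair.1.unpair.1 q.1.1.unpair.1 q.1.2.unpair.1 q.2.1.1 q.2.2 :=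
      stepB_prim.comp (α := (ℕ × ℕ) × (ℕ × Bool) × ℕ)
        (g := fun q => ((q.1.1.unpair.2.unpair.1.unpair.1, q.1.1.unpair.1), q.1.2.unpair.1))
        (h := fun q => (q.2.1.1, q.2.2))
        (((pe.comp Primrec.fst).pair (pn.comp Primrec.fst)).pair (ps.comp Primrec.fst))
        ((Primrec.fst.comp (Primrec.fst.comp Primrec.snd)).pair (Primrec.snd.comp Primrec.snd))
    have hh : Primrec₂ fun (a : ℕ × ℕ) (p : (ℕ × Bool) × ℕ) =>
        ((p.2, p.1.2 && stepB a.1.unpair.2.unpair.1.unpair.1 a.1.unpair.1 a.2.unpair.1 p.1.1 p.2) :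
          ℕ × Bool) := by
      have hb : Primrec fun q : (ℕ × ℕ) × (ℕ × Bool) × ℕ =>
          q.2.1.2 && stepB q.1.1.unpair.2.unpair.1.unpair.1 q.1.1.unpair.1 q.1.2.unpair.1
            q.2.1.1 q.2.2 :=
        hband.comp (α := (ℕ × ℕ) × (ℕ × Bool) × ℕ)
          (g := fun q => q.2.1.2)
          (h := fun q => stepB q.1.1.unpair.2.unpair.1.unpair.1 q.1.1.unpair.1 q.1.2.unpair.1
            q.2.1.1 q.2.2)
          (Primrec.snd.comp (Primrec.fst.comp Primrec.snd)) hstep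
      exact (Primrec.snd.comp Primrec.snd).pair hb
    exact Primrec.list_foldl (f := fun a : ℕ × ℕ => Denumerable.ofNat (List ℕ) a.2.unpair.2)
      (g := fun a : ℕ × ℕ => ((a.1.unpair.2.unpair.1.unpair.2, true) : ℕ × Bool))
      pL (px.pair (Primrec.const true)) hh
  have heq : Primrec₂ fun a b : ℕ => decide (a = b) := Primrec.eq.decide
  have hchk : Primrec fun a : ℕ × ℕ =>
      chk a.1.unpair.2.unpair.1.unpair.1 a.1.unpair.1 a.2.unpair.1
        a.1.unpair.2.unpair.1.unpair.2 a.1.unpair.2.unpair.2.unpair.2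
        (Denumerable.ofNat (List ℕ) a.2.unpair.2) := by
    have h1 : Primrec fun a : ℕ × ℕ =>
        ((Denumerable.ofNat (List ℕ) a.2.unpair.2).foldl
          (chkStep a.1.unpair.2.unpair.1.unpair.1 a.1.unpair.1 a.2.unpair.1)
          (a.1.unpair.2.unpair.1.unpair.2, true)).2 := Primrec.snd.comp hfold
    have h2 : Primrec fun a : ℕ × ℕ =>
        decide (((Denumerable.ofNat (List ℕ) a.2.unpair.2).foldl
          (chkStep a.1.unpair.2.unpair.1.unpair.1 a.1.unpair.1 a.2.unpair.1)
          (a.1.unpair.2.unpair.1.unpair.2, true)).1 = a.1.unpair.2.unpair.2.unpair.2) :=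
      heq.comp (α := ℕ × ℕ)
        (g := fun a => ((Denumerable.ofNat (List ℕ) a.2.unpair.2).foldl
          (chkStep a.1.unpair.2.unpair.1.unpair.1 a.1.unpair.1 a.2.unpair.1)
          (a.1.unpair.2.unpair.1.unpair.2, true)).1)
        (h := fun a => a.1.unpair.2.unpair.2.unpair.2)
        (Primrec.fst.comp hfold) py
    exact hband.comp (α := ℕ × ℕ)
      (g := fun a => ((Denumerable.ofNat (List ℕ) a.2.unpair.2).foldl
          (chkStep a.1.unpair.2.unpair.1.unpair.1 a.1.unpair.1 a.2.unpair.1)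
          (a.1.unpair.2.unpair.1.unpair.2, true)).2)
      (h := fun a => decide (((Denumerable.ofNat (List ℕ) a.2.unpair.2).foldl
          (chkStep a.1.unpair.2.unpair.1.unpair.1 a.1.unpair.1 a.2.unpair.1)
          (a.1.unpair.2.unpair.1.unpair.2, true)).1 = a.1.unpair.2.unpair.2.unpair.2))
      h1 h2
  have hd : Primrec fun a : ℕ × ℕ =>
      decide (a.1.unpair.2.unpair.1.unpair.1 = a.1.unpair.2.unpair.2.unpair.1) :=
    heq.comp (α := ℕ × ℕ)
      (g := fun a => a.1.unpair.2.unpair.1.unpair.1)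
      (h := fun a => a.1.unpair.2.unpair.2.unpair.1) pe pv1
  exact hband.comp (α := ℕ × ℕ)
    (g := fun a => decide (a.1.unpair.2.unpair.1.unpair.1 = a.1.unpair.2.unpair.2.unpair.1))
    (h := fun a =>
      chk a.1.unpair.2.unpair.1.unpair.1 a.1.unpair.1 a.2.unpair.1
        a.1.unpair.2.unpair.1.unpair.2 a.1.unpair.2.unpair.2.unpair.2
        (Denumerable.ofNat (List ℕ) a.2.unpair.2))
    hd hchk

def Psi (k : ℕ) : Part ℕ := Nat.rfind fun w => Part.some (ψb k w)

theorem psi_partrec : Partrec Psi := by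
  have := Partrec.rfind (p := fun (k : ℕ) (w : ℕ) => (Part.some (ψb k w) : Part Bool)) ?_
  · exact this
  · exact Computable₂.partrec₂ (Primrec₂.to_comp ψb_primrec)

theorem psi_dom (k : ℕ) : (Psi k).Dom ↔ ∃ w, ψb k w = true := by
  unfold Psi; refine (Nat.rfind_dom (p := fun w => Part.some (ψb k w))).trans ?_
  constructor
  · rintro ⟨w, h1, _⟩
    exact ⟨w, (Part.mem_some_iff.1 h1).symm⟩
  · rintro ⟨w, hw⟩
    exact ⟨w, Part.mem_some_iff.2 hw.symm, fun {_} _ => trivial⟩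

end Stmt10Aux

open Stmt10Aux in
/-- There is an effectively Π⁰₂ equivalence relation to which every
effectively Π⁰₂ equivalence relation is computably reducible. -/
theorem stmt_10 :
    ∃ U : ℕ → ℕ → Prop, Equivalence U ∧ EffectivelyPi02 U ∧
      ∀ E : ℕ → ℕ → Prop, Equivalence E → EffectivelyPi02 E →
        ComputablyReducible E U := by
  classical
  -- the universal relation
  refine ⟨fun u v => ∀ n, Fu n u v, ?_, ?_, ?_⟩
  · exact ⟨fun u n => (fu_equiv n).refl u,
      fun h n => (fu_equiv n).symm (h n),
      fun h1 h2 n => (fu_equiv n).trans (h1 n) (h2 n)⟩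
  · -- effectively Π⁰₂
    obtain ⟨c, hc⟩ := Nat.Partrec.Code.exists_code.1 (Partrec.nat_iff.1 psi_partrec)
    have key : ∀ n u v : ℕ,
        Nat.pair u v ∈ W (Encodable.encode (c.curry n)) ↔ Fu n u v := by
      intro n u v
      rw [W, Set.mem_setOf_eq, Denumerable.ofNat_encode, eval_curry, hc, psi_dom]
      exact (fu_iff_psib n u v).symm
    refine ⟨fun n => Encodable.encode (c.curry n), ?_, ?_, ?_⟩
    · exact Primrec.to_comp <| Primrec.encode.comp <|
        primrec₂_curry.comp (Primrec.const c) Primrec.id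
    · intro n
      refine ⟨fun u => (key n u u).2 ((fu_equiv n).refl u),
        fun h => (key n _ _).2 ((fu_equiv n).symm ((key n _ _).1 h)),
        fun h1 h2 => (key n _ _).2 ((fu_equiv n).trans ((key n _ _).1 h1) ((key n _ _).1 h2))⟩
    · intro u v
      exact forall_congr' fun n => (key n u v).symm
  · -- universality
    rintro E hEq ⟨h, hcomp, heqv, hE⟩
    obtain ⟨ch, hch⟩ := Nat.Partrec.Code.exists_code.1 (Partrec.nat_iff.1 hcomp.partrec)
    set e := Encodable.encode ch with he
    have hS : ∀ n m : ℕ, m ∈ S e n ↔ m ∈ W (h n) := by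
      intro n m
      rw [S, Set.mem_setOf_eq, he, Denumerable.ofNat_encode, hch]
      simp [W, PFun.coe_val]
    have hclos : ∀ n x y : ℕ, Clos (S e n) x y ↔ Nat.pair x y ∈ W (h n) := by
      intro n x y
      exact clos_iff_of_equiv (heqv n) (fun a b => hS n (Nat.pair a b)) x y
    refine ⟨fun x => Nat.pair e x, ?_, ?_⟩
    · exact Primrec.to_comp <| Primrec₂.natPair.comp (Primrec.const e) Primrec.id
    · intro x y
      rw [hE]
      refine forall_congr' fun n => ?_
      simp only [Fu, Nat.unpair_pair, true_and]
      exact (hclos n x y).symm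
end

section
/- Let (⪯, ⊓, ⊔, ᶜ, 0, 1) be an r.e.-presented Boolean algebra on ℕ with induced equivalence ≈. Suppose U, V ⊆ ℕ are disjoint r.e. sets that are effectively inseparable, and there is a total computable g : ℕ → ℕ such that x ∈ U → g x ≈ 0 and x ∈ V → g x ≈ 1. Then the Boolean algebra is effectively inseparable, i.e. the disjoint r.e. sets {x : x ≈ 0} and {x : x ≈ 1} are effectively inseparable. -/
/-- Disjoint sets `A`, `B` are effectively inseparable: there is a computable
binary productive function. -/
def EffectivelyInseparable (A B : Set ℕ) : Prop :=
  ∃ g : ℕ → ℕ → ℕ, Computable₂ g ∧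
    ∀ p q, A ⊆ W p → B ⊆ W q → W p ∩ W q = ∅ → g p q ∉ W p ∪ W q

/-- An r.e.-presented (nontrivial) Boolean algebra on ℕ. -/
structure REBooleanAlgebra where
  le : ℕ → ℕ → Prop
  inf : ℕ → ℕ → ℕ
  sup : ℕ → ℕ → ℕ
  compl : ℕ → ℕ
  bot : ℕ
  top : ℕ
  le_re : REPred (fun p : ℕ × ℕ => le p.1 p.2)
  le_refl : ∀ x, le x x
  le_trans : ∀ x y z, le x y → le y z → le x z
  inf_computable : Computable₂ inf
  sup_computable : Computable₂ sup
  compl_computable : Computable compl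
  inf_le_left : ∀ x y, le (inf x y) x
  inf_le_right : ∀ x y, le (inf x y) y
  le_inf : ∀ x y z, le z x → le z y → le z (inf x y)
  le_sup_left : ∀ x y, le x (sup x y)
  le_sup_right : ∀ x y, le y (sup x y)
  sup_le : ∀ x y z, le x z → le y z → le (sup x y) z
  bot_le : ∀ x, le bot x
  le_top : ∀ x, le x top
  distrib : ∀ x y z, le (inf x (sup y z)) (sup (inf x y) (inf x z)) ∧
    le (sup (inf x y) (inf x z)) (inf x (sup y z))
  inf_compl : ∀ x, le (inf x (compl x)) bot ∧ le bot (inf x (compl x))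
  sup_compl : ∀ x, le (sup x (compl x)) top ∧ le top (sup x (compl x))
  nontrivial : ¬ (le bot top ∧ le top bot)

/-- The induced equivalence of an r.e.-presented Boolean algebra. -/
def REBooleanAlgebra.equiv (B : REBooleanAlgebra) (x y : ℕ) : Prop :=
  B.le x y ∧ B.le y x

open Nat.Partrec (Code) in
theorem key (g : ℕ → ℕ) (hg : Computable g) :
    ∃ k : ℕ → ℕ, Computable k ∧ ∀ e, W (k e) = {x | g x ∈ W e} := by
  have hF : Nat.Partrec (fun n : ℕ =>
      (Denumerable.ofNat Code n.unpair.1).eval (g n.unpair.2)) := by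
    apply Partrec.nat_iff.mp
    exact Nat.Partrec.Code.eval_part.comp
      ((Computable.ofNat Code).comp (Computable.fst.comp Computable.unpair))
      (hg.comp (Computable.snd.comp Computable.unpair))
  obtain ⟨c₀, hc₀⟩ := Nat.Partrec.Code.exists_code.mp hF
  obtain ⟨f, hf, hfe⟩ := Nat.Partrec.Code.smn
  refine ⟨fun e => Encodable.encode (f c₀ e),
    Computable.encode.comp (hf.comp (Computable.const c₀) Computable.id), ?_⟩
  intro e
  ext x
  have : (Denumerable.ofNat Code (Encodable.encode (f c₀ e))).eval x
      = (Denumerable.ofNat Code e).eval (g x) := by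
    rw [Denumerable.ofNat_encode, hfe, hc₀]
    simp
  simp only [W, Set.mem_setOf_eq, this]

/-- Criterion for effective inseparability of an r.e.-presented Boolean
algebra. -/
theorem stmt_11 (B : REBooleanAlgebra) (U V : Set ℕ)
    (hUV : U ∩ V = ∅) (hU : REPred (fun n => n ∈ U)) (hV : REPred (fun n => n ∈ V))
    (hei : EffectivelyInseparable U V)
    (g : ℕ → ℕ) (hg : Computable g)
    (hg0 : ∀ x, x ∈ U → B.equiv (g x) B.bot)
    (hg1 : ∀ x, x ∈ V → B.equiv (g x) B.top) :
    {x | B.equiv x B.bot} ∩ {x | B.equiv x B.top} = ∅ ∧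
      EffectivelyInseparable {x | B.equiv x B.bot} {x | B.equiv x B.top} := by
  constructor
  · ext x
    simp only [Set.mem_inter_iff, Set.mem_setOf_eq, Set.mem_empty_iff_false, iff_false]
    rintro ⟨⟨hxb, hbx⟩, ⟨hxt, htx⟩⟩
    exact B.nontrivial ⟨B.le_trans _ _ _ hbx hxt, B.le_trans _ _ _ htx hxb⟩
  · obtain ⟨h, hh, hprod⟩ := hei
    obtain ⟨k, hk, hkW⟩ := key g hg
    refine ⟨fun p q => g (h (k p) (k q)),
      hg.comp (hh.comp (hk.comp Computable.fst) (hk.comp Computable.snd)), ?_⟩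
    intro p q hp hq hpq
    have hUp : U ⊆ W (k p) := by
      intro x hx
      rw [hkW]
      exact hp (hg0 x hx)
    have hVq : V ⊆ W (k q) := by
      intro x hx
      rw [hkW]
      exact hq (hg1 x hx)
    have hdisj : W (k p) ∩ W (k q) = ∅ := by
      ext x
      simp only [hkW, Set.mem_inter_iff, Set.mem_setOf_eq, Set.mem_empty_iff_false, iff_false]
      rintro ⟨h1, h2⟩
      exact Set.eq_empty_iff_forall_notMem.mp hpq (g x) ⟨h1, h2⟩
    have := hprod (k p) (k q) hUp hVq hdisj
    intro hmem
    apply this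
    rcases hmem with hmem | hmem
    · left; rw [hkW]; exact hmem
    · right; rw [hkW]; exact hmem
end

section
/- Let A ⊆ ℕ be a recursively enumerable set that is not computable, and let U, V ⊆ ℕ be disjoint Σ⁰₃ sets. Then there are total computable functions a, b : ℕ → ℕ such that for every x: W_{a x} ∪ W_{b x} = A and W_{a x} ∩ W_{b x} = ∅ (an r.e. splitting of A), and moreover if x ∈ U then W_{a x} is computable, and if x ∈ V then W_{b x} is computable. -/
/-- A set of naturals is Σ⁰₃. -/
def Sigma03Set (U : Set ℕ) : Prop :=
  ∃ M : ℕ → ℕ → ℕ → ℕ → Bool,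
    Computable (fun p : ℕ × ℕ × ℕ × ℕ => M p.1 p.2.1 p.2.2.1 p.2.2.2) ∧
    ∀ x, x ∈ U ↔ ∃ a, ∀ b, ∃ c, M x a b c = true

namespace Splt
open Nat.Partrec Nat.Partrec.Code Computable

variable {M MU MV : ℕ → ℕ → ℕ → ℕ → Bool} {cA : Code}

def bx (M : ℕ → ℕ → ℕ → ℕ → Bool) (x a b s : ℕ) : Bool :=
  Nat.rec false (fun c r => r || M x a b c) s

def bl (M : ℕ → ℕ → ℕ → ℕ → Bool) (x a b s : ℕ) : Bool :=
  Nat.rec true (fun b' r => r && bx M x a b' s) b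

def cntAux (M : ℕ → ℕ → ℕ → ℕ → Bool) (x a s n : ℕ) : ℕ :=
  Nat.rec 0 (fun b r => if bl M x a (b+1) s then b+1 else r) n

def cnt (M : ℕ → ℕ → ℕ → ℕ → Bool) (x a s : ℕ) : ℕ := cntAux M x a s s

def least (p : ℕ → Bool) (n : ℕ) : Option ℕ :=
  Nat.rec none (fun t r => if r.isSome then r else if p t then some t else none) n

def gcnt (MU MV : ℕ → ℕ → ℕ → ℕ → Bool) (x j s : ℕ) : ℕ :=
  cnt (if j % 2 = 0 then MU else MV) x (j/2) s

def ctrl (MU MV : ℕ → ℕ → ℕ → ℕ → Bool) (x z t : ℕ) : Option ℕ :=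
  least (fun j => decide (z < gcnt MU MV x j t)) t

def ent (cA : Code) (s z : ℕ) : Bool := (evaln s cA z).isSome

def fent (cA : Code) (s z : ℕ) : Option ℕ := least (fun t => ent cA t z) (s+1)

def sd (MU MV : ℕ → ℕ → ℕ → ℕ → Bool) (cA : Code) (x z s : ℕ) : Bool :=
  Option.casesOn (fent cA s z) false fun t =>
    Option.casesOn (ctrl MU MV x z t) false fun j => (j % 2 == 0)

def qv (MU MV : ℕ → ℕ → ℕ → ℕ → Bool) (cA : Code) (v : Bool) (x z s : ℕ) : Bool :=
  ent cA s z && (sd MU MV cA x z s == v)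

theorem bx_comp (hM : Computable fun p : ℕ × ℕ × ℕ × ℕ => M p.1 p.2.1 p.2.2.1 p.2.2.2) :
    Computable fun p : (ℕ × ℕ × ℕ) × ℕ => bx M p.1.1 p.1.2.1 p.1.2.2 p.2 := by
  have harg : Computable fun p : ((ℕ × ℕ × ℕ) × ℕ) × (ℕ × Bool) =>
      (p.1.1.1, p.1.1.2.1, p.1.1.2.2, p.2.1) :=
    ((fst.comp fst).comp fst).pair
      (((fst.comp snd).comp (fst.comp fst)).pair
        ((((snd.comp snd).comp (fst.comp fst))).pair (fst.comp snd)))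
  have hMc : Computable fun p : ((ℕ × ℕ × ℕ) × ℕ) × (ℕ × Bool) =>
      M p.1.1.1 p.1.1.2.1 p.1.1.2.2 p.2.1 := (hM.comp harg).of_eq fun p => rfl
  have hb : Computable fun p : ((ℕ × ℕ × ℕ) × ℕ) × (ℕ × Bool) => p.2.2 := snd.comp snd
  have hor : Computable₂ (· || · : Bool → Bool → Bool) := (Primrec.dom_bool₂ _).to_comp
  have key : Computable fun p : ((ℕ × ℕ × ℕ) × ℕ) × (ℕ × Bool) =>
      (p.2.2 || M p.1.1.1 p.1.1.2.1 p.1.1.2.2 p.2.1) := (hor.comp hb hMc).of_eq fun p => rfl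
  exact (Computable.nat_rec snd (const false) key.to₂).of_eq fun p => rfl

theorem bl_comp (hM : Computable fun p : ℕ × ℕ × ℕ × ℕ => M p.1 p.2.1 p.2.2.1 p.2.2.2) :
    Computable fun p : (ℕ × ℕ × ℕ) × ℕ => bl M p.1.1 p.1.2.1 p.2 p.1.2.2 := by
  have harg : Computable fun p : ((ℕ × ℕ × ℕ) × ℕ) × (ℕ × Bool) =>
      ((p.1.1.1, p.1.1.2.1, p.2.1), p.1.1.2.2) :=
    (((fst.comp fst).comp fst).pair
      (((fst.comp snd).comp (fst.comp fst)).pair (fst.comp snd))).pair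
        ((snd.comp snd).comp (fst.comp fst))
  have hbx : Computable fun p : ((ℕ × ℕ × ℕ) × ℕ) × (ℕ × Bool) =>
      bx M p.1.1.1 p.1.1.2.1 p.2.1 p.1.1.2.2 := ((bx_comp hM).comp harg).of_eq fun p => rfl
  have hb : Computable fun p : ((ℕ × ℕ × ℕ) × ℕ) × (ℕ × Bool) => p.2.2 := snd.comp snd
  have hand : Computable₂ (· && · : Bool → Bool → Bool) := (Primrec.dom_bool₂ _).to_comp
  have key : Computable fun p : ((ℕ × ℕ × ℕ) × ℕ) × (ℕ × Bool) =>
      (p.2.2 && bx M p.1.1.1 p.1.1.2.1 p.2.1 p.1.1.2.2) :=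
    (hand.comp hb hbx).of_eq fun p => rfl
  exact (Computable.nat_rec snd (const true) key.to₂).of_eq fun p => rfl

theorem cntAux_comp (hM : Computable fun p : ℕ × ℕ × ℕ × ℕ => M p.1 p.2.1 p.2.2.1 p.2.2.2) :
    Computable fun p : (ℕ × ℕ × ℕ) × ℕ => cntAux M p.1.1 p.1.2.1 p.1.2.2 p.2 := by
  have hsucc : Computable fun p : ((ℕ × ℕ × ℕ) × ℕ) × (ℕ × ℕ) => p.2.1 + 1 :=
    (Primrec.succ.to_comp.comp (fst.comp snd)).of_eq fun p => rfl
  have harg : Computable fun p : ((ℕ × ℕ × ℕ) × ℕ) × (ℕ × ℕ) =>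
      ((p.1.1.1, p.1.1.2.1, p.1.1.2.2), p.2.1 + 1) :=
    ((((fst.comp fst).comp fst).pair
      (((fst.comp snd).comp (fst.comp fst)).pair ((snd.comp snd).comp (fst.comp fst)))).pair
        hsucc)
  have hbl : Computable fun p : ((ℕ × ℕ × ℕ) × ℕ) × (ℕ × ℕ) =>
      bl M p.1.1.1 p.1.1.2.1 (p.2.1 + 1) p.1.1.2.2 := ((bl_comp hM).comp harg).of_eq fun p => rfl
  have key : Computable fun p : ((ℕ × ℕ × ℕ) × ℕ) × (ℕ × ℕ) =>
      (if bl M p.1.1.1 p.1.1.2.1 (p.2.1+1) p.1.1.2.2 then p.2.1+1 else p.2.2) :=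
    (Computable.cond hbl hsucc (snd.comp snd)).of_eq fun p => by
      by_cases h : bl M p.1.1.1 p.1.1.2.1 (p.2.1+1) p.1.1.2.2 = true <;> simp [h]
  exact (Computable.nat_rec snd (const 0) key.to₂).of_eq fun p => rfl

theorem cnt_comp (hM : Computable fun p : ℕ × ℕ × ℕ × ℕ => M p.1 p.2.1 p.2.2.1 p.2.2.2) :
    Computable fun p : ℕ × ℕ × ℕ => cnt M p.1 p.2.1 p.2.2 :=
  ((cntAux_comp hM).comp (Computable.id.pair (snd.comp snd))).of_eq fun p => rfl

theorem gcnt_comp (hMU : Computable fun p : ℕ × ℕ × ℕ × ℕ => MU p.1 p.2.1 p.2.2.1 p.2.2.2)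
    (hMV : Computable fun p : ℕ × ℕ × ℕ × ℕ => MV p.1 p.2.1 p.2.2.1 p.2.2.2) :
    Computable fun p : ℕ × ℕ × ℕ => gcnt MU MV p.1 p.2.1 p.2.2 := by
  have hmod : Computable fun p : ℕ × ℕ × ℕ => p.2.1 % 2 :=
    Primrec.nat_mod.to_comp.comp (fst.comp snd) (const 2)
  have hc : Computable fun p : ℕ × ℕ × ℕ => (p.2.1 % 2 == 0) :=
    (Primrec.beq.to_comp.comp hmod (const 0)).of_eq fun p => rfl
  have hdiv : Computable fun p : ℕ × ℕ × ℕ => p.2.1 / 2 :=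
    Primrec.nat_div.to_comp.comp (fst.comp snd) (const 2)
  have harg : Computable fun p : ℕ × ℕ × ℕ => (p.1, p.2.1 / 2, p.2.2) :=
    fst.pair (hdiv.pair (snd.comp snd))
  have h1 : Computable fun p : ℕ × ℕ × ℕ => cnt MU p.1 (p.2.1/2) p.2.2 :=
    ((cnt_comp hMU).comp harg).of_eq fun p => rfl
  have h2 : Computable fun p : ℕ × ℕ × ℕ => cnt MV p.1 (p.2.1/2) p.2.2 :=
    ((cnt_comp hMV).comp harg).of_eq fun p => rfl
  refine (Computable.cond hc h1 h2).of_eq fun p => ?_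
  by_cases h : p.2.1 % 2 = 0
  · have hb : (p.2.1 % 2 == 0) = true := by simp [h]
    simp [gcnt, hb, h]
  · have hb : (p.2.1 % 2 == 0) = false := by simp [h]
    simp [gcnt, hb, h]

theorem least_comp {α : Type} [Primcodable α] {q : α → ℕ → Bool} {f : α → ℕ}
    (hq : Computable fun p : α × ℕ => q p.1 p.2) (hf : Computable f) :
    Computable fun a => least (q a) (f a) := by
  have hr : Computable fun p : α × (ℕ × Option ℕ) => p.2.2 := snd.comp snd
  have hqc : Computable fun p : α × (ℕ × Option ℕ) => q p.1 p.2.1 :=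
    (hq.comp (fst.pair (fst.comp snd))).of_eq fun p => rfl
  have hsome : Computable fun p : α × (ℕ × Option ℕ) => (some p.2.1 : Option ℕ) :=
    Primrec.option_some.to_comp.comp (fst.comp snd)
  have hinner : Computable fun p : α × (ℕ × Option ℕ) =>
      (if q p.1 p.2.1 then some p.2.1 else (none : Option ℕ)) :=
    (Computable.cond hqc hsome (const none)).of_eq fun p => by
      by_cases h : q p.1 p.2.1 = true <;> simp [h]
  have hisSome : Computable fun p : α × (ℕ × Option ℕ) => p.2.2.isSome :=
    (Primrec.option_isSome.to_comp.comp hr).of_eq fun p => rfl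
  have key : Computable fun p : α × (ℕ × Option ℕ) =>
      (if p.2.2.isSome then p.2.2 else if q p.1 p.2.1 then some p.2.1 else none) :=
    (Computable.cond hisSome hr hinner).of_eq fun p => by
      by_cases h : p.2.2.isSome = true <;> simp [h]
  exact (Computable.nat_rec hf (const (none : Option ℕ)) key.to₂).of_eq fun a => rfl

theorem ctrl_comp (hMU : Computable fun p : ℕ × ℕ × ℕ × ℕ => MU p.1 p.2.1 p.2.2.1 p.2.2.2)
    (hMV : Computable fun p : ℕ × ℕ × ℕ × ℕ => MV p.1 p.2.1 p.2.2.1 p.2.2.2) :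
    Computable fun p : ℕ × ℕ × ℕ => ctrl MU MV p.1 p.2.1 p.2.2 := by
  have hg : Computable fun p : (ℕ × ℕ × ℕ) × ℕ => gcnt MU MV p.1.1 p.2 p.1.2.2 :=
    ((gcnt_comp hMU hMV).comp
      ((fst.comp fst).pair (snd.pair ((snd.comp snd).comp fst)))).of_eq fun p => rfl
  have hz : Computable fun p : (ℕ × ℕ × ℕ) × ℕ => p.1.2.1 := (fst.comp snd).comp fst
  have hlt : Computable fun p : (ℕ × ℕ × ℕ) × ℕ =>
      decide (p.1.2.1 < gcnt MU MV p.1.1 p.2 p.1.2.2) :=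
    (Primrec.nat_lt.decide.to_comp.comp hz hg).of_eq fun p => rfl
  exact (least_comp (q := fun (a : ℕ × ℕ × ℕ) j => decide (a.2.1 < gcnt MU MV a.1 j a.2.2))
    (f := fun a => a.2.2) hlt (snd.comp snd)).of_eq fun p => rfl

theorem ent_comp : Computable fun p : ℕ × ℕ => ent cA p.1 p.2 :=
  (Primrec.option_isSome.to_comp.comp
    (primrec_evaln.to_comp.comp ((fst.pair (const cA)).pair snd))).of_eq fun p => rfl

theorem fent_comp : Computable fun p : ℕ × ℕ => fent cA p.1 p.2 := by
  have he : Computable fun p : (ℕ × ℕ) × ℕ => ent cA p.2 p.1.2 :=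
    ((ent_comp (cA := cA)).comp (snd.pair (snd.comp fst))).of_eq fun p => rfl
  exact (least_comp (q := fun (a : ℕ × ℕ) t => ent cA t a.2) (f := fun a => a.1 + 1)
    he ((Primrec.succ.to_comp.comp fst).of_eq fun p => rfl)).of_eq fun p => rfl

theorem sd_comp (hMU : Computable fun p : ℕ × ℕ × ℕ × ℕ => MU p.1 p.2.1 p.2.2.1 p.2.2.2)
    (hMV : Computable fun p : ℕ × ℕ × ℕ × ℕ => MV p.1 p.2.1 p.2.2.1 p.2.2.2) :
    Computable fun p : ℕ × ℕ × ℕ => sd MU MV cA p.1 p.2.1 p.2.2 := by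
  have hfent : Computable fun p : ℕ × ℕ × ℕ => fent cA p.2.2 p.2.1 :=
    ((fent_comp (cA := cA)).comp ((snd.comp snd).pair (fst.comp snd))).of_eq fun p => rfl
  have hctrl : Computable fun p : (ℕ × ℕ × ℕ) × ℕ => ctrl MU MV p.1.1 p.1.2.1 p.2 :=
    ((ctrl_comp hMU hMV).comp
      ((fst.comp fst).pair (((fst.comp snd).comp fst).pair snd))).of_eq fun p => rfl
  have hmod : Computable fun p : ((ℕ × ℕ × ℕ) × ℕ) × ℕ => (p.2 % 2 == 0) :=
    (Primrec.beq.to_comp.comp (Primrec.nat_mod.to_comp.comp snd (const 2))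
      (const 0)).of_eq fun p => rfl
  have hinner : Computable fun p : (ℕ × ℕ × ℕ) × ℕ =>
      (Option.casesOn (ctrl MU MV p.1.1 p.1.2.1 p.2) false
        fun j => (j % 2 == 0) : Bool) :=
    Computable.option_casesOn hctrl (const false) hmod.to₂
  exact (Computable.option_casesOn hfent (const false) hinner.to₂).of_eq fun p => rfl

theorem qv_comp (hMU : Computable fun p : ℕ × ℕ × ℕ × ℕ => MU p.1 p.2.1 p.2.2.1 p.2.2.2)
    (hMV : Computable fun p : ℕ × ℕ × ℕ × ℕ => MV p.1 p.2.1 p.2.2.1 p.2.2.2) (v : Bool) :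
    Computable fun p : ℕ × ℕ × ℕ => qv MU MV cA v p.1 p.2.1 p.2.2 := by
  have hand : Computable₂ (· && · : Bool → Bool → Bool) := (Primrec.dom_bool₂ _).to_comp
  have hbeq : Computable fun b : Bool => (b == v) := (Primrec.dom_bool _).to_comp
  have he : Computable fun p : ℕ × ℕ × ℕ => ent cA p.2.2 p.2.1 :=
    ((ent_comp (cA := cA)).comp ((snd.comp snd).pair (fst.comp snd))).of_eq fun p => rfl
  have hs : Computable fun p : ℕ × ℕ × ℕ => (sd MU MV cA p.1 p.2.1 p.2.2 == v) :=
    (hbeq.comp (sd_comp hMU hMV)).of_eq fun p => rfl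
  exact (hand.comp he hs).of_eq fun p => rfl

theorem bx_iff {M x a b s} : bx M x a b s = true ↔ ∃ c < s, M x a b c = true := by
  induction s with
  | zero => simp [bx]
  | succ s ih =>
    show (bx M x a b s || M x a b s) = true ↔ _
    rw [Bool.or_eq_true, ih]
    constructor
    · rintro (⟨c, hc, h⟩ | h)
      · exact ⟨c, hc.trans (Nat.lt_succ_self s), h⟩
      · exact ⟨s, Nat.lt_succ_self s, h⟩
    · rintro ⟨c, hc, h⟩
      rcases Nat.lt_succ_iff_lt_or_eq.1 hc with h' | rfl
      · exact Or.inl ⟨c, h', h⟩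
      · exact Or.inr h

theorem bl_iff {M x a b s} : bl M x a b s = true ↔ ∀ b' < b, bx M x a b' s = true := by
  induction b with
  | zero => simp [bl]
  | succ b ih =>
    show (bl M x a b s && bx M x a b s) = true ↔ _
    rw [Bool.and_eq_true, ih]
    constructor
    · rintro ⟨h1, h2⟩ b' hb'
      rcases Nat.lt_succ_iff_lt_or_eq.1 hb' with h' | rfl
      · exact h1 _ h'
      · exact h2
    · intro h
      exact ⟨fun b' hb' => h b' (hb'.trans (Nat.lt_succ_self b)), h b (Nat.lt_succ_self b)⟩

theorem bx_mono {M x a b s s'} (h : s ≤ s') (hb : bx M x a b s = true) :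
    bx M x a b s' = true := by
  rw [bx_iff] at hb ⊢
  obtain ⟨c, hc, hm⟩ := hb
  exact ⟨c, hc.trans_le h, hm⟩

theorem bl_mono {M x a b s s'} (h : s ≤ s') (hb : bl M x a b s = true) :
    bl M x a b s' = true := by
  rw [bl_iff] at hb ⊢
  exact fun b' hb' => bx_mono h (hb b' hb')

theorem bl_anti {M x a b b' s} (h : b' ≤ b) (hb : bl M x a b s = true) :
    bl M x a b' s = true := by
  rw [bl_iff] at hb ⊢
  exact fun c hc => hb c (hc.trans_le h)

theorem cntAux_le {M x a s n} : cntAux M x a s n ≤ n := by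
  induction n with
  | zero => simp [cntAux]
  | succ n ih =>
    show (if bl M x a (n+1) s then n+1 else cntAux M x a s n) ≤ n + 1
    split
    · exact le_rfl
    · exact ih.trans (Nat.le_succ n)

theorem cntAux_succ {M x a s n} :
    cntAux M x a s (n+1) = if bl M x a (n+1) s then n+1 else cntAux M x a s n := rfl

theorem cntAux_mono_n {M x a s n n'} (h : n ≤ n') :
    cntAux M x a s n ≤ cntAux M x a s n' := by
  induction n' with
  | zero => simpa [Nat.le_zero.1 h] using le_rfl
  | succ n' ih =>
    rcases Nat.lt_succ_iff_lt_or_eq.1 (Nat.lt_succ_of_le h) with h' | rfl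
    · refine (ih (Nat.lt_succ_iff.1 h')).trans ?_
      rw [cntAux_succ]
      split
      · exact cntAux_le.trans (Nat.le_succ n')
      · exact le_rfl
    · exact le_rfl

theorem cntAux_mono_s {M x a s s' n} (h : s ≤ s') :
    cntAux M x a s n ≤ cntAux M x a s' n := by
  induction n with
  | zero => simp [cntAux]
  | succ n ih =>
    rw [cntAux_succ, cntAux_succ]
    by_cases hb : bl M x a (n+1) s = true
    · rw [if_pos hb, if_pos (bl_mono h hb)]
    · rw [if_neg hb]
      split
      · exact (cntAux_le.trans (Nat.le_succ n))
      · exact ih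

theorem cnt_mono {M x a s s'} (h : s ≤ s') : cnt M x a s ≤ cnt M x a s' :=
  (cntAux_mono_s h).trans (cntAux_mono_n h)

theorem bl_of_lt_cntAux {M x a s n z} (h : z < cntAux M x a s n) :
    bl M x a (z+1) s = true := by
  induction n with
  | zero => simp [cntAux] at h
  | succ n ih =>
    rw [cntAux_succ] at h
    split at h
    · next hb => exact bl_anti (Nat.succ_le_succ (Nat.lt_succ_iff.1 h)) hb
    · exact ih h

theorem bl_of_lt_cnt {M x a s z} (h : z < cnt M x a s) : bl M x a (z+1) s = true :=
  bl_of_lt_cntAux h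

theorem le_cntAux {M x a s n k} (hb : bl M x a k s = true) (hk : k ≤ n) :
    k ≤ cntAux M x a s n := by
  induction n with
  | zero => simpa [Nat.le_zero.1 hk, cntAux] using Nat.le_zero.1 hk ▸ Nat.zero_le _
  | succ n ih =>
    rcases Nat.lt_succ_iff_lt_or_eq.1 (Nat.lt_succ_of_le hk) with h' | rfl
    · exact (ih (Nat.lt_succ_iff.1 h')).trans (cntAux_mono_n (Nat.le_succ n))
    · rw [cntAux_succ, if_pos hb]

/-- unboundedness of the count for a true guess -/
theorem cnt_unbounded {M : ℕ → ℕ → ℕ → ℕ → Bool} {x a : ℕ}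
    (H : ∀ b, ∃ c, M x a b c = true) (z : ℕ) : ∃ s, z < cnt M x a s := by
  have key : ∀ k, ∃ s, ∀ b' < k, bx M x a b' s = true := by
    intro k
    induction k with
    | zero => exact ⟨0, fun b' hb' => absurd hb' (Nat.not_lt_zero _)⟩
    | succ k ih =>
      obtain ⟨s, hs⟩ := ih
      obtain ⟨c, hc⟩ := H k
      refine ⟨max s (c+1), fun b' hb' => ?_⟩
      rcases Nat.lt_succ_iff_lt_or_eq.1 hb' with h' | rfl
      · exact bx_mono (le_max_left _ _) (hs _ h')
      · exact bx_iff.2 ⟨c, lt_of_lt_of_le (Nat.lt_succ_self c) (le_max_right _ _), hc⟩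
  obtain ⟨s, hs⟩ := key (z+1)
  refine ⟨max s (z+1), ?_⟩
  have hbl : bl M x a (z+1) (max s (z+1)) = true :=
    bl_iff.2 fun b' hb' => bx_mono (le_max_left _ _) (hs b' hb')
  have : z + 1 ≤ cnt M x a (max s (z+1)) := le_cntAux hbl (le_max_right _ _)
  omega

/-- boundedness of the count for a false guess -/
theorem cnt_bounded {M : ℕ → ℕ → ℕ → ℕ → Bool} {x a : ℕ}
    (H : ¬ ∀ b, ∃ c, M x a b c = true) : ∃ B, ∀ s, cnt M x a s ≤ B := by
  push_neg at H
  obtain ⟨b₀, hb₀⟩ := H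
  refine ⟨b₀, fun s => ?_⟩
  by_contra h
  push_neg at h
  have := bl_of_lt_cnt h
  rw [bl_iff] at this
  have := bx_iff.1 (this b₀ (Nat.lt_succ_self b₀))
  obtain ⟨c, _, hc⟩ := this
  exact absurd hc (by simp [hb₀ c])

theorem least_succ {p n} :
    least p (n+1) = if (least p n).isSome then least p n
      else if p n then some n else none := rfl

theorem least_isSome_iff {p : ℕ → Bool} {n : ℕ} :
    (least p n).isSome = true ↔ ∃ t < n, p t = true := by
  induction n with
  | zero => simp [least]
  | succ n ih =>
    rw [least_succ]
    by_cases h : (least p n).isSome = true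
    · rw [if_pos h]
      obtain ⟨t, ht, hp⟩ := ih.1 h
      exact ⟨fun _ => ⟨t, ht.trans (Nat.lt_succ_self n), hp⟩, fun _ => h⟩
    · rw [if_neg h]
      by_cases hp : p n = true
      · rw [if_pos hp]
        exact ⟨fun _ => ⟨n, Nat.lt_succ_self n, hp⟩, fun _ => rfl⟩
      · rw [if_neg hp]
        simp only [Option.isSome_none, Bool.false_eq_true, false_iff]
        rintro ⟨t, ht, hpt⟩
        rcases Nat.lt_succ_iff_lt_or_eq.1 ht with h' | rfl
        · exact h (ih.2 ⟨t, h', hpt⟩)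
        · exact hp hpt

theorem least_eq_some_iff {p : ℕ → Bool} {n t : ℕ} :
    least p n = some t ↔ t < n ∧ p t = true ∧ ∀ t' < t, p t' = false := by
  induction n with
  | zero => simp [least]
  | succ n ih =>
    rw [least_succ]
    by_cases h : (least p n).isSome = true
    · rw [if_pos h, ih]
      constructor
      · rintro ⟨h1, h2, h3⟩
        exact ⟨h1.trans (Nat.lt_succ_self n), h2, h3⟩
      · rintro ⟨h1, h2, h3⟩
        obtain ⟨u, hu, hpu⟩ := least_isSome_iff.1 h
        refine ⟨?_, h2, h3⟩
        by_contra hc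
        push_neg at hc
        have : u < t := lt_of_lt_of_le hu hc
        exact absurd (h3 u this) (by simp [hpu])
    · rw [if_neg h]
      have hno : ∀ t' < n, p t' = false := by
        intro t' ht'
        by_contra hc
        exact h (least_isSome_iff.2 ⟨t', ht', by simpa using hc⟩)
      by_cases hp : p n = true
      · rw [if_pos hp]
        constructor
        · intro he
          obtain rfl : n = t := Option.some.inj he
          exact ⟨Nat.lt_succ_self _, hp, hno⟩
        · rintro ⟨h1, h2, _⟩
          rcases Nat.lt_succ_iff_lt_or_eq.1 h1 with h' | rfl
          · exact absurd h2 (by simp [hno t h'])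
          · rfl
      · rw [if_neg hp]
        constructor
        · intro he
          exact absurd he (by simp)
        · rintro ⟨h1, h2, _⟩
          rcases Nat.lt_succ_iff_lt_or_eq.1 h1 with h' | rfl
          · exact absurd h2 (by simp [hno t h'])
          · exact absurd h2 hp

theorem least_eq_some_of {p : ℕ → Bool} {n t : ℕ} (h1 : t < n) (h2 : p t = true)
    (h3 : ∀ t' < t, p t' = false) : least p n = some t :=
  least_eq_some_iff.2 ⟨h1, h2, h3⟩

theorem least_eq_none_iff {p : ℕ → Bool} {n : ℕ} :
    least p n = (Option.none : Option ℕ) ↔ ∀ t < n, p t = false := by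
  constructor
  · intro h t ht
    by_contra hc
    have := least_isSome_iff.2 ⟨t, ht, by simpa using hc⟩
    rw [h] at this
    simp at this
  · intro h
    cases he : least p n with
    | none => rfl
    | some t =>
      obtain ⟨h1, h2, _⟩ := least_eq_some_iff.1 he
      exact absurd h2 (by simp [h t h1])

theorem ent_mono {cA : Code} {s s' z : ℕ} (h : s ≤ s') (he : ent cA s z = true) :
    ent cA s' z = true := by
  unfold ent at he ⊢
  rw [Option.isSome_iff_exists] at he ⊢
  obtain ⟨a, ha⟩ := he
  exact ⟨a, evaln_mono h ha⟩

def gtrue (MU MV : ℕ → ℕ → ℕ → ℕ → Bool) (x j : ℕ) : Prop :=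
  ∀ b, ∃ c, (if j % 2 = 0 then MU else MV) x (j/2) b c = true

theorem gcnt_unbounded {x j : ℕ} (h : gtrue MU MV x j) (z : ℕ) :
    ∃ s, z < gcnt MU MV x j s := cnt_unbounded h z

theorem gcnt_bounded {x j : ℕ} (h : ¬ gtrue MU MV x j) : ∃ B, ∀ s, gcnt MU MV x j s ≤ B :=
  cnt_bounded h

theorem gcnt_mono {x j s s' : ℕ} (h : s ≤ s') : gcnt MU MV x j s ≤ gcnt MU MV x j s' :=
  cnt_mono h

theorem ctrl_eq_some_iff {x z t j : ℕ} : ctrl MU MV x z t = some j ↔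
    j < t ∧ z < gcnt MU MV x j t ∧ ∀ j' < j, ¬ z < gcnt MU MV x j' t := by
  unfold ctrl
  rw [least_eq_some_iff]
  simp only [decide_eq_true_eq, decide_eq_false_iff_not]

theorem fent_eq {cA : Code} {s z : ℕ} (hz : ent cA s z = true) :
    fent cA s z = some (Nat.find (⟨s, hz⟩ : ∃ t, ent cA t z = true)) := by
  apply least_eq_some_of
  · exact Nat.lt_succ_of_le (Nat.find_min' _ hz)
  · exact Nat.find_spec (⟨s, hz⟩ : ∃ t, ent cA t z = true)
  · intro t' ht'
    have := Nat.find_min (⟨s, hz⟩ : ∃ t, ent cA t z = true) ht'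
    simpa using this

theorem sd_eq {cA : Code} {x z s : ℕ} (hz : ent cA s z = true) :
    sd MU MV cA x z s =
      (Option.casesOn (ctrl MU MV x z (Nat.find (⟨s, hz⟩ : ∃ t, ent cA t z = true))) false
        fun j => (j % 2 == 0) : Bool) := by
  unfold sd
  rw [fent_eq hz]

theorem sd_const {cA : Code} {x z s s' : ℕ} (h1 : ent cA s z = true) (h2 : ent cA s' z = true) :
    sd MU MV cA x z s = sd MU MV cA x z s' := by
  rw [sd_eq h1, sd_eq h2,
    Subsingleton.elim (⟨s, h1⟩ : ∃ t, ent cA t z = true) (⟨s', h2⟩ : ∃ t, ent cA t z = true)]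

theorem bdd_of_forall {k : ℕ} {g : ℕ → ℕ → ℕ} (h : ∀ j < k, ∃ B, ∀ s, g j s ≤ B) :
    ∃ Bd, ∀ j < k, ∀ s, g j s ≤ Bd := by
  induction k with
  | zero => exact ⟨0, fun j hj => absurd hj (Nat.not_lt_zero _)⟩
  | succ k ih =>
    obtain ⟨B1, h1⟩ := ih fun j hj => h j (hj.trans (Nat.lt_succ_self k))
    obtain ⟨B2, h2⟩ := h k (Nat.lt_succ_self k)
    refine ⟨max B1 B2, fun j hj s => ?_⟩
    rcases Nat.lt_succ_iff_lt_or_eq.1 hj with h' | rfl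
    · exact (h1 j h' s).trans (le_max_left _ _)
    · exact (h2 s).trans (le_max_right _ _)

theorem main_comp (hMU : Computable fun p : ℕ × ℕ × ℕ × ℕ => MU p.1 p.2.1 p.2.2.1 p.2.2.2)
    (hMV : Computable fun p : ℕ × ℕ × ℕ × ℕ => MV p.1 p.2.1 p.2.2.1 p.2.2.2)
    {x i₀ : ℕ} (ht : gtrue MU MV x i₀) (hlt : ∀ j < i₀, ¬ gtrue MU MV x j) :
    ComputablePred fun z => ∃ s, ent cA s z = true ∧
      sd MU MV cA x z s = !(i₀ % 2 == 0) := by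
  classical
  obtain ⟨Bd, hBd⟩ := bdd_of_forall (g := fun j s => gcnt MU MV x j s)
    (fun j hj => gcnt_bounded (hlt j hj))
  have hex : ∀ z, ∃ s, z < gcnt MU MV x i₀ s := gcnt_unbounded ht
  -- the least stage where the true guess count exceeds z
  have hgcnt : Computable fun p : ℕ × ℕ => gcnt MU MV x i₀ p.2 :=
    ((gcnt_comp hMU hMV).comp ((const x).pair ((const i₀).pair snd))).of_eq fun p => rfl
  have hgc : Computable fun p : ℕ × ℕ => decide (p.1 < gcnt MU MV x i₀ p.2) :=
    (Primrec.nat_lt.decide.to_comp.comp fst hgcnt).of_eq fun p => rfl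
  have hpart : Partrec fun z : ℕ =>
      Nat.rfind fun s => (Part.some (decide (z < gcnt MU MV x i₀ s)) : Part Bool) :=
    Partrec.rfind hgc.to₂.partrec₂
  have hgcomp : Computable fun z => Nat.find (hex z) := by
    refine hpart.of_eq_tot fun z => ?_
    refine Nat.mem_rfind.2 ⟨?_, fun {m} hm => ?_⟩
    · exact Part.mem_some_iff.2 (by simp [Nat.find_spec (hex z)])
    · exact Part.mem_some_iff.2 (by simp [Nat.find_min (hex z) hm])
  have hTcomp : Computable fun z => max (i₀+1) (Nat.find (hex z)) :=
    (Primrec.nat_max.to_comp.comp (const (i₀+1)) hgcomp).of_eq fun z => rfl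
  set pv : Bool := !(i₀ % 2 == 0) with hpv
  set P : ℕ → Prop := fun z => ∃ s, ent cA s z = true ∧ sd MU MV cA x z s = pv with hP
  set L : List Bool := (List.range Bd).map fun z => decide (P z) with hL
  have hqvcomp : Computable fun z => qv MU MV cA pv x z (max (i₀+1) (Nat.find (hex z))) :=
    ((qv_comp hMU hMV pv).comp ((const x).pair (Computable.id.pair hTcomp))).of_eq fun z => rfl
  have hgetD : Computable fun z : ℕ => L.getD z false :=
    ((Primrec.list_getD false).to_comp.comp (const L) Computable.id).of_eq fun z => rfl
  have hltBd : Computable fun z : ℕ => decide (z < Bd) :=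
    (Primrec.nat_lt.decide.to_comp.comp Computable.id (const Bd)).of_eq fun z => rfl
  have hFcomp : Computable fun z : ℕ =>
      (if z < Bd then L.getD z false
        else qv MU MV cA pv x z (max (i₀+1) (Nat.find (hex z)))) := by
    refine (Computable.cond hltBd hgetD hqvcomp).of_eq fun z => ?_
    by_cases h : z < Bd <;> simp [h]
  rw [ComputablePred.computable_iff]
  refine ⟨_, hFcomp, funext fun z => propext ?_⟩
  show P z ↔ _
  by_cases hz : z < Bd
  · rw [if_pos hz]
    have hlook : L.getD z false = decide (P z) := by
      rw [hL]
      rw [List.getD_eq_getElem?_getD]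
      simp [List.getElem?_map, List.getElem?_range, hz]
    rw [hlook]
    simp
  · rw [if_neg hz]
    push_neg at hz
    unfold qv
    constructor
    · rintro ⟨s, hs, hsd⟩
      by_cases hcase : Nat.find (⟨s, hs⟩ : ∃ t, ent cA t z = true) ≤
          max (i₀+1) (Nat.find (hex z))
      · have hentT : ent cA (max (i₀+1) (Nat.find (hex z))) z = true :=
          ent_mono hcase (Nat.find_spec (⟨s, hs⟩ : ∃ t, ent cA t z = true))
        rw [Bool.and_eq_true, beq_iff_eq]
        exact ⟨hentT, (sd_const hentT hs).trans hsd⟩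
      · exfalso
        push_neg at hcase
        have hctrl : ctrl MU MV x z (Nat.find (⟨s, hs⟩ : ∃ t, ent cA t z = true)) = some i₀ := by
          rw [ctrl_eq_some_iff]
          refine ⟨?_, ?_, ?_⟩
          · have h1 : i₀ + 1 ≤ max (i₀+1) (Nat.find (hex z)) := le_max_left _ _
            omega
          · have h1 : Nat.find (hex z) ≤ max (i₀+1) (Nat.find (hex z)) := le_max_right _ _
            calc z < gcnt MU MV x i₀ (Nat.find (hex z)) := Nat.find_spec (hex z)
              _ ≤ gcnt MU MV x i₀ (Nat.find (⟨s, hs⟩ : ∃ t, ent cA t z = true)) :=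
                gcnt_mono (by omega)
          · intro j' hj'
            exact Nat.not_lt.2 ((hBd j' hj' _).trans hz)
        have heq : sd MU MV cA x z s = (i₀ % 2 == 0) := by
          rw [sd_eq hs, hctrl]
        rw [heq, hpv] at hsd
        cases h2 : (i₀ % 2 == 0 : Bool) <;> rw [h2] at hsd <;> simp at hsd
    · intro h
      rw [Bool.and_eq_true, beq_iff_eq] at h
      exact ⟨_, h.1, h.2⟩

end Splt


open Nat.Partrec Nat.Partrec.Code Computable Splt

/-- Uniform r.e. splittings of a noncomputable r.e. set `A` whose left part is
computable on `U` and right part is computable on `V`, for a disjoint pair of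
Σ⁰₃ sets `U, V`. -/
theorem stmt_13 (A : Set ℕ) (hAre : REPred (fun n => n ∈ A))
    (hAnc : ¬ ComputablePred (fun n => n ∈ A))
    (U V : Set ℕ) (hU : Sigma03Set U) (hV : Sigma03Set V) (hUV : U ∩ V = ∅) :
    ∃ a b : ℕ → ℕ, Computable a ∧ Computable b ∧
      ∀ x, (W (a x) ∪ W (b x) = A ∧ W (a x) ∩ W (b x) = ∅ ∧
        (x ∈ U → ComputablePred (fun n => n ∈ W (a x))) ∧
        (x ∈ V → ComputablePred (fun n => n ∈ W (b x)))) := by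
  classical
  obtain ⟨MU, hMU, hUspec⟩ := hU
  obtain ⟨MV, hMV, hVspec⟩ := hV
  -- a code for A
  have h1 : Partrec fun n : ℕ => (Part.assert (n ∈ A) fun _ => Part.some 0 : Part ℕ) := by
    have hmap := hAre.map ((const 0 : Computable fun _ : ℕ × Unit => (0:ℕ)).to₂)
    refine hmap.of_eq fun n => ?_
    ext m
    simp [Part.mem_map_iff, Part.mem_assert_iff, eq_comm]
  obtain ⟨cA, hcA⟩ := exists_code.1 (Partrec.nat_iff.1 h1)
  have memA : ∀ z, z ∈ A ↔ ∃ s, ent cA s z = true := by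
    intro z
    constructor
    · intro hz
      have hdom : (eval cA z).Dom := by
        rw [hcA]; exact ⟨hz, trivial⟩
      obtain ⟨v, hv⟩ := Part.dom_iff_mem.1 hdom
      obtain ⟨k, hk⟩ := evaln_complete.1 hv
      refine ⟨k, ?_⟩
      unfold Splt.ent
      rw [Option.isSome_iff_exists]
      exact ⟨v, hk⟩
    · rintro ⟨s, hs⟩
      unfold Splt.ent at hs
      rw [Option.isSome_iff_exists] at hs
      obtain ⟨v, hv⟩ := hs
      have hv' : v ∈ eval cA z := evaln_complete.2 ⟨s, hv⟩
      rw [hcA] at hv'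
      exact (Part.mem_assert_iff.1 hv').fst
  -- codes for the two halves
  have hcode : ∀ v : Bool, ∃ c : Code, ∀ x z : ℕ,
      ((eval (curry c x) z).Dom ↔ ∃ s, ent cA s z = true ∧ sd MU MV cA x z s = v) := by
    intro v
    have hu1 : Computable fun p : ℕ × ℕ => p.1.unpair.1 :=
      (Primrec.fst.comp Primrec.unpair).to_comp.comp fst
    have hu2 : Computable fun p : ℕ × ℕ => p.1.unpair.2 :=
      (Primrec.snd.comp Primrec.unpair).to_comp.comp fst
    have hqvc : Computable fun p : ℕ × ℕ =>
        qv MU MV cA v p.1.unpair.1 p.1.unpair.2 p.2 :=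
      ((qv_comp hMU hMV v).comp (hu1.pair (hu2.pair snd))).of_eq fun p => rfl
    have hpart : Partrec fun n : ℕ => Nat.rfind fun s =>
        (Part.some (qv MU MV cA v n.unpair.1 n.unpair.2 s) : Part Bool) :=
      Partrec.rfind hqvc.to₂.partrec₂
    obtain ⟨c, hc⟩ := exists_code.1 (Partrec.nat_iff.1 hpart)
    refine ⟨c, fun x z => ?_⟩
    rw [eval_curry, hc]
    dsimp only
    refine Nat.rfind_dom.trans ?_
    constructor
    · rintro ⟨n, htr, -⟩
      rw [Part.mem_some_iff] at htr
      have := htr.symm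
      rw [Nat.unpair_pair] at this
      unfold Splt.qv at this
      rw [Bool.and_eq_true, beq_iff_eq] at this
      exact ⟨n, this.1, this.2⟩
    · rintro ⟨s, h1, h2⟩
      refine ⟨s, ?_, fun {m} _ => trivial⟩
      rw [Part.mem_some_iff, Nat.unpair_pair]
      symm
      unfold Splt.qv
      rw [Bool.and_eq_true, beq_iff_eq]
      exact ⟨h1, h2⟩
  obtain ⟨c₀, hc₀⟩ := hcode false
  obtain ⟨c₁, hc₁⟩ := hcode true
  refine ⟨fun x => Encodable.encode (curry c₀ x), fun x => Encodable.encode (curry c₁ x),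
    (Primrec.encode.comp (primrec₂_curry.comp (Primrec.const c₀) Primrec.id)).to_comp,
    (Primrec.encode.comp (primrec₂_curry.comp (Primrec.const c₁) Primrec.id)).to_comp,
    fun x => ?_⟩
  have hWa : ∀ z, z ∈ W (Encodable.encode (curry c₀ x)) ↔
      ∃ s, ent cA s z = true ∧ sd MU MV cA x z s = false := by
    intro z
    rw [show z ∈ W (Encodable.encode (curry c₀ x)) ↔
        (eval (curry c₀ x) z).Dom by rw [W, Denumerable.ofNat_encode]; rfl]
    exact hc₀ x z
  have hWb : ∀ z, z ∈ W (Encodable.encode (curry c₁ x)) ↔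
      ∃ s, ent cA s z = true ∧ sd MU MV cA x z s = true := by
    intro z
    rw [show z ∈ W (Encodable.encode (curry c₁ x)) ↔
        (eval (curry c₁ x) z).Dom by rw [W, Denumerable.ofNat_encode]; rfl]
    exact hc₁ x z
  refine ⟨?_, ?_, ?_, ?_⟩
  · -- union
    ext z
    simp only [Set.mem_union, hWa, hWb]
    constructor
    · rintro (⟨s, hs, -⟩ | ⟨s, hs, -⟩) <;> exact (memA z).2 ⟨s, hs⟩
    · intro hz
      obtain ⟨s, hs⟩ := (memA z).1 hz
      cases hsd : sd MU MV cA x z s with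
      | false => exact Or.inl ⟨s, hs, hsd⟩
      | true => exact Or.inr ⟨s, hs, hsd⟩
  · -- disjoint
    ext z
    simp only [Set.mem_inter_iff, hWa, hWb, Set.mem_empty_iff_false, iff_false, not_and]
    rintro ⟨s, hs, hsd⟩ ⟨s', hs', hsd'⟩
    have := sd_const (MU := MU) (MV := MV) (x := x) hs hs'
    rw [hsd, hsd'] at this
    exact absurd this (by simp)
  · -- x ∈ U : left part computable
    intro hxU
    have hxV : x ∉ V := fun hxV => by
      have : x ∈ U ∩ V := ⟨hxU, hxV⟩
      rw [hUV] at this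
      exact this
    obtain ⟨w, hw⟩ := (hUspec x).1 hxU
    have hex : ∃ j, gtrue MU MV x j := by
      refine ⟨2*w, ?_⟩
      have h2 : (2*w) % 2 = 0 := by omega
      have hd : (2*w) / 2 = w := by omega
      simpa [gtrue, h2, hd] using hw
    have ht := Nat.find_spec hex
    have hltm : ∀ j < Nat.find hex, ¬ gtrue MU MV x j := fun j hj => Nat.find_min hex hj
    have heven : Nat.find hex % 2 = 0 := by
      by_contra hodd
      have h1 : Nat.find hex % 2 = 1 := by omega
      apply hxV
      refine (hVspec x).2 ⟨Nat.find hex / 2, ?_⟩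
      have := ht
      change ∀ b, ∃ c, (if Nat.find hex % 2 = 0 then MU else MV) x (Nat.find hex / 2) b c = true at this
      rw [if_neg (by omega)] at this
      exact this
    have hmain := main_comp (cA := cA) hMU hMV ht hltm
    have hval : (!(Nat.find hex % 2 == 0) : Bool) = false := by simp [heven]
    rw [hval] at hmain
    exact hmain.of_eq fun z => ((hWa z).symm).trans (Iff.rfl)
  · -- x ∈ V : right part computable
    intro hxV
    have hxU : x ∉ U := fun hxU => by
      have : x ∈ U ∩ V := ⟨hxU, hxV⟩
      rw [hUV] at this
      exact this
    obtain ⟨w, hw⟩ := (hVspec x).1 hxV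
    have hex : ∃ j, gtrue MU MV x j := by
      refine ⟨2*w+1, ?_⟩
      have h2 : (2*w+1) % 2 = 1 := by omega
      have hd : (2*w+1) / 2 = w := by omega
      simpa [gtrue, h2, hd] using hw
    have ht := Nat.find_spec hex
    have hltm : ∀ j < Nat.find hex, ¬ gtrue MU MV x j := fun j hj => Nat.find_min hex hj
    have hodd : Nat.find hex % 2 = 1 := by
      by_contra hodd
      have h1 : Nat.find hex % 2 = 0 := by omega
      apply hxU
      refine (hUspec x).2 ⟨Nat.find hex / 2, ?_⟩
      have := ht
      change ∀ b, ∃ c, (if Nat.find hex % 2 = 0 then MU else MV) x (Nat.find hex / 2) b c = true at this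
      rw [if_pos h1] at this
      exact this
    have hmain := main_comp (cA := cA) hMU hMV ht hltm
    have hval : (!(Nat.find hex % 2 == 0) : Bool) = true := by simp [hodd]
    rw [hval] at hmain
    exact hmain.of_eq fun z => ((hWb z).symm).trans (Iff.rfl)
end

section
/- The relation E₁^{ce} on ℕ defined by E₁^{ce} i j ↔ the set {n : (W_i)_n ≠ (W_j)_n} is finite (i.e. for all but finitely many n the n-th columns of W_i and W_j agree) is a Σ⁰₃-complete equivalence relation: it is an equivalence relation, it is Σ⁰₃, and every Σ⁰₃ equivalence relation F on ℕ admits a total computable f : ℕ → ℕ with F i j ↔ E₁^{ce} (f i) (f j) for all i, j. -/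
set_option maxHeartbeats 1000000


/-- A binary relation on ℕ is Σ⁰₃. -/
def Sigma03Rel (P : ℕ → ℕ → Prop) : Prop :=
  ∃ M : ℕ → ℕ → ℕ → ℕ → ℕ → Bool,
    Computable (fun p : ℕ × ℕ × ℕ × ℕ × ℕ => M p.1 p.2.1 p.2.2.1 p.2.2.2.1 p.2.2.2.2) ∧
    ∀ x y, P x y ↔ ∃ a, ∀ b, ∃ c, M x y a b c = true

/-- The `n`-th column of a set of naturals. -/
def column (A : Set ℕ) (n : ℕ) : Set ℕ := {x | Nat.pair n x ∈ A}

/-- Almost all columns of `W i` and `W j` agree. -/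
def E1ce (i j : ℕ) : Prop := {n | column (W i) n ≠ column (W j) n}.Finite

namespace Stmt16Aux

open Nat.Partrec (Code)
open Nat.Partrec.Code

/-! ### Part 1: E1ce is an equivalence relation -/

theorem equiv_E1ce : Equivalence E1ce := by
  constructor
  · intro x
    have : {n | column (W x) n ≠ column (W x) n} = ∅ := by ext n; simp
    rw [E1ce, this]; exact Set.finite_empty
  · intro x y h
    exact h.subset fun n hn => fun he => hn (he.symm)
  · intro x y z hxy hyz
    refine (hxy.union hyz).subset fun n hn => ?_
    by_contra hc
    simp only [Set.mem_union, Set.mem_setOf_eq, not_or, not_not] at hc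
    exact hn (hc.1.trans hc.2)

/-! ### Part 2: E1ce is Σ⁰₃ -/

def haltB (e k p : ℕ) : Bool :=
  (evaln k (Denumerable.ofNat Code e) p).isSome

theorem mem_W_iff_halt {e p : ℕ} : p ∈ W e ↔ ∃ k, haltB e k p = true := by
  constructor
  · intro h
    obtain ⟨v, hv⟩ := Part.dom_iff_mem.1 h
    obtain ⟨k, hk⟩ := evaln_complete.1 hv
    exact ⟨k, by simp [haltB, Option.isSome_iff_exists]; exact ⟨v, hk⟩⟩
  · rintro ⟨k, hk⟩
    obtain ⟨v, hv⟩ := Option.isSome_iff_exists.1 hk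
    exact Part.dom_iff_mem.2 ⟨v, evaln_sound hv⟩

def matE (x y a b c : ℕ) : Bool :=
  if b.unpair.1 < a then true
  else if b.unpair.2.unpair.2.unpair.2 = 0 then
    (!(haltB x b.unpair.2.unpair.2.unpair.1 (Nat.pair b.unpair.1 b.unpair.2.unpair.1)))
      || haltB y c (Nat.pair b.unpair.1 b.unpair.2.unpair.1)
  else
    (!(haltB y b.unpair.2.unpair.2.unpair.1 (Nat.pair b.unpair.1 b.unpair.2.unpair.1)))
      || haltB x c (Nat.pair b.unpair.1 b.unpair.2.unpair.1)

theorem primrec_haltB : Primrec fun q : ℕ × ℕ × ℕ => haltB q.1 q.2.1 q.2.2 := by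
  have h1 : Primrec fun q : ℕ × ℕ × ℕ => ((q.2.1, Denumerable.ofNat Code q.1), q.2.2) :=
    Primrec.pair (Primrec.pair (Primrec.fst.comp Primrec.snd)
      ((Primrec.ofNat Code).comp Primrec.fst)) (Primrec.snd.comp Primrec.snd)
  exact Primrec.option_isSome.comp (primrec_evaln.comp h1)

theorem finite_iff_bound {S : Set ℕ} : S.Finite ↔ ∃ a, ∀ n ∈ S, n < a := by
  constructor
  · intro h
    rcases h.bddAbove with ⟨a, ha⟩
    exact ⟨a + 1, fun n hn => Nat.lt_succ_of_le (ha hn)⟩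
  · rintro ⟨a, ha⟩
    exact (Set.finite_Iio a).subset fun n hn => ha n hn

theorem sigma3_E1ce : Sigma03Rel E1ce := by
  refine ⟨matE, ?_, ?_⟩
  · apply Primrec.to_comp
    have pb : Primrec fun p : ℕ × ℕ × ℕ × ℕ × ℕ => p.2.2.2.1 :=
      Primrec.fst.comp (Primrec.snd.comp (Primrec.snd.comp Primrec.snd))
    have pc : Primrec fun p : ℕ × ℕ × ℕ × ℕ × ℕ => p.2.2.2.2 :=
      Primrec.snd.comp (Primrec.snd.comp (Primrec.snd.comp Primrec.snd))
    have pa : Primrec fun p : ℕ × ℕ × ℕ × ℕ × ℕ => p.2.2.1 :=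
      Primrec.fst.comp (Primrec.snd.comp Primrec.snd)
    have px : Primrec fun p : ℕ × ℕ × ℕ × ℕ × ℕ => p.1 := Primrec.fst
    have py : Primrec fun p : ℕ × ℕ × ℕ × ℕ × ℕ => p.2.1 := Primrec.fst.comp Primrec.snd
    have pn : Primrec fun p : ℕ × ℕ × ℕ × ℕ × ℕ => p.2.2.2.1.unpair.1 :=
      Primrec.fst.comp (Primrec.unpair.comp pb)
    have pm : Primrec fun p : ℕ × ℕ × ℕ × ℕ × ℕ => p.2.2.2.1.unpair.2.unpair.1 :=
      Primrec.fst.comp (Primrec.unpair.comp (Primrec.snd.comp (Primrec.unpair.comp pb)))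
    have pk : Primrec fun p : ℕ × ℕ × ℕ × ℕ × ℕ => p.2.2.2.1.unpair.2.unpair.2.unpair.1 :=
      Primrec.fst.comp (Primrec.unpair.comp (Primrec.snd.comp (Primrec.unpair.comp
        (Primrec.snd.comp (Primrec.unpair.comp pb)))))
    have pd : Primrec fun p : ℕ × ℕ × ℕ × ℕ × ℕ => p.2.2.2.1.unpair.2.unpair.2.unpair.2 :=
      Primrec.snd.comp (Primrec.unpair.comp (Primrec.snd.comp (Primrec.unpair.comp
        (Primrec.snd.comp (Primrec.unpair.comp pb)))))
    have ppair : Primrec fun p : ℕ × ℕ × ℕ × ℕ × ℕ =>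
        Nat.pair p.2.2.2.1.unpair.1 p.2.2.2.1.unpair.2.unpair.1 :=
      Primrec₂.natPair.comp pn pm
    have h1 := Primrec.or.comp (Primrec.not.comp (primrec_haltB.comp (px.pair (pk.pair ppair))))
      (primrec_haltB.comp (py.pair (pc.pair ppair)))
    have h2 := Primrec.or.comp (Primrec.not.comp (primrec_haltB.comp (py.pair (pk.pair ppair))))
      (primrec_haltB.comp (px.pair (pc.pair ppair)))
    have hin := Primrec.ite (Primrec.eq.comp pd (Primrec.const 0)) h1 h2
    exact Primrec.ite (Primrec.nat_lt.comp pn pa) (Primrec.const true) hin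
  · intro x y
    constructor
    · intro h
      obtain ⟨a, ha⟩ := finite_iff_bound.1 h
      refine ⟨a, fun b => ?_⟩
      by_cases hna : b.unpair.1 < a
      · exact ⟨0, by simp [matE, hna]⟩
      have hcol : column (W x) b.unpair.1 = column (W y) b.unpair.1 := by
        by_contra hc
        exact absurd (ha b.unpair.1 hc) hna
      by_cases hd : b.unpair.2.unpair.2.unpair.2 = 0
      · by_cases hh : haltB x b.unpair.2.unpair.2.unpair.1
          (Nat.pair b.unpair.1 b.unpair.2.unpair.1) = true
        · have : b.unpair.2.unpair.1 ∈ column (W x) b.unpair.1 :=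
            mem_W_iff_halt.2 ⟨_, hh⟩
          rw [hcol] at this
          obtain ⟨c, hc⟩ := mem_W_iff_halt.1 this
          exact ⟨c, by simp [matE, hna, hd, hc]⟩
        · exact ⟨0, by simp [matE, hna, hd, Bool.eq_false_iff.2 hh]⟩
      · by_cases hh : haltB y b.unpair.2.unpair.2.unpair.1
          (Nat.pair b.unpair.1 b.unpair.2.unpair.1) = true
        · have : b.unpair.2.unpair.1 ∈ column (W y) b.unpair.1 :=
            mem_W_iff_halt.2 ⟨_, hh⟩
          rw [← hcol] at this
          obtain ⟨c, hc⟩ := mem_W_iff_halt.1 this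
          exact ⟨c, by simp [matE, hna, hd, hc]⟩
        · exact ⟨0, by simp [matE, hna, hd, Bool.eq_false_iff.2 hh]⟩
    · rintro ⟨a, ha⟩
      refine finite_iff_bound.2 ⟨a, fun n hn => ?_⟩
      by_contra hna
      push_neg at hna
      apply hn
      ext m
      constructor
      · intro hm
        obtain ⟨k, hk⟩ := mem_W_iff_halt.1 hm
        obtain ⟨c, hc⟩ := ha (Nat.pair n (Nat.pair m (Nat.pair k 0)))
        simp [matE, Nat.unpair_pair, (Nat.not_lt.2 hna), hk] at hc
        exact mem_W_iff_halt.2 ⟨c, hc⟩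
      · intro hm
        obtain ⟨k, hk⟩ := mem_W_iff_halt.1 hm
        obtain ⟨c, hc⟩ := ha (Nat.pair n (Nat.pair m (Nat.pair k 1)))
        simp [matE, Nat.unpair_pair, (Nat.not_lt.2 hna), hk] at hc
        exact mem_W_iff_halt.2 ⟨c, hc⟩


/-! ## Part 3: completeness -/


def e5 (x y a b c : ℕ) : ℕ := Nat.pair x (Nat.pair y (Nat.pair a (Nat.pair b c)))

def allB (p : ℕ → Bool) : ℕ → Bool
  | 0 => true
  | k+1 => allB p k && p k

def anyB (p : ℕ → Bool) : ℕ → Bool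
  | 0 => false
  | k+1 => anyB p k || p k

def cntB (p : ℕ → Bool) : ℕ → ℕ
  | 0 => 0
  | k+1 => cntB p k + (bif p k then 1 else 0)

theorem allB_iff (p : ℕ → Bool) : ∀ k, (allB p k = true ↔ ∀ m, m < k → p m = true)
  | 0 => by simp [allB]
  | k+1 => by
    simp only [allB, Bool.and_eq_true, allB_iff p k]
    constructor
    · rintro ⟨h1, h2⟩ m hm
      rcases Nat.lt_succ_iff_lt_or_eq.1 hm with h | h
      · exact h1 m h
      · subst h; exact h2
    · intro h
      exact ⟨fun m hm => h m (hm.trans (Nat.lt_succ_self k)), h k (Nat.lt_succ_self k)⟩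

theorem anyB_iff (p : ℕ → Bool) : ∀ k, (anyB p k = true ↔ ∃ m, m < k ∧ p m = true)
  | 0 => by simp [anyB]
  | k+1 => by
    simp only [anyB, Bool.or_eq_true, anyB_iff p k]
    constructor
    · rintro (⟨m, hm, hp⟩ | h)
      · exact ⟨m, hm.trans (Nat.lt_succ_self k), hp⟩
      · exact ⟨k, Nat.lt_succ_self k, h⟩
    · rintro ⟨m, hm, hp⟩
      rcases Nat.lt_succ_iff_lt_or_eq.1 hm with h | h
      · exact Or.inl ⟨m, h, hp⟩
      · subst h; exact Or.inr hp

theorem cntB_le (p : ℕ → Bool) : ∀ k, cntB p k ≤ k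
  | 0 => le_refl _
  | k+1 => by
    have := cntB_le p k
    cases hp : p k <;> simp [cntB, hp] <;> omega

theorem cntB_mono_k (p : ℕ → Bool) {k k' : ℕ} (h : k ≤ k') : cntB p k ≤ cntB p k' := by
  induction k', h using Nat.le_induction with
  | base => exact le_refl _
  | succ m hm ih => exact le_trans ih (Nat.le_add_right _ _)

theorem cntB_mono_p {p q : ℕ → Bool} (hpq : ∀ m, p m = true → q m = true) :
    ∀ k, cntB p k ≤ cntB q k
  | 0 => le_refl _
  | k+1 => by
    have h1 := cntB_mono_p hpq k
    have h2 : (bif p k then 1 else 0) ≤ (bif q k then 1 else 0) := by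
      cases hp : p k
      · simp
      · simp [hpq k hp]
    exact Nat.add_le_add h1 h2

theorem cntB_full {p : ℕ → Bool} : ∀ {k}, (∀ m, m < k → p m = true) → cntB p k = k
  | 0, _ => rfl
  | k+1, h => by
    have ih := cntB_full (fun m hm => h m (hm.trans (Nat.lt_succ_self k)))
    simp [cntB, h k (Nat.lt_succ_self k), ih]

theorem cntB_bound {p : ℕ → Bool} {N : ℕ} (h : ∀ m, p m = true → m < N) :
    ∀ k, cntB p k ≤ N
  | 0 => Nat.zero_le _
  | k+1 => by
    rcases Nat.lt_or_ge k N with hk | hk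
    · exact le_trans (cntB_le p (k+1)) hk
    · have hpk : p k = false := by
        cases hp : p k
        · rfl
        · exact absurd (h k hp) (Nat.not_lt.2 hk)
      simpa [cntB, hpk] using cntB_bound h k

theorem cntB_pigeon {p : ℕ → Bool} {N k : ℕ} (h : N < cntB p k) :
    ∃ m, N ≤ m ∧ p m = true := by
  by_contra hc
  push_neg at hc
  have : ∀ m, p m = true → m < N := by
    intro m hm
    by_contra hmn
    exact (hc m (Nat.not_lt.1 hmn)) hm
  exact absurd (cntB_bound this k) (Nat.not_le.2 h)

/-! ### seen / okb / ell / sync -/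

def seenB (cM : Code) (t v : ℕ) : Bool := decide (evaln t cM v = some 1)

def okb (cM : Code) (x y a b t : ℕ) : Bool :=
  allB (fun b' => anyB (fun c => seenB cM t (e5 (min x y) (max x y) a b' c)) (t+1)) b

def ell (cM : Code) (x y a t : ℕ) : ℕ := cntB (fun b => okb cM x y a b t) (t+1)

def syncB (cM : Code) (n u v t : ℕ) : Bool :=
  decide (Nat.pair (min u v) (max u v) ≤ n) &&
    anyB (fun a => decide (n ≤ ell cM u v a t) && decide (ell cM u v a (t-1) < ell cM u v a t))
      (n+1)

theorem seen_mono {cM : Code} {t t' v : ℕ} (htt : t ≤ t') (h : seenB cM t v = true) :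
    seenB cM t' v = true := by
  simp only [seenB, decide_eq_true_eq] at *
  exact evaln_mono htt h

theorem okb_iff {cM : Code} {x y a b t : ℕ} :
    okb cM x y a b t = true ↔
      ∀ b', b' < b → ∃ c, c ≤ t ∧ seenB cM t (e5 (min x y) (max x y) a b' c) = true := by
  rw [okb, allB_iff]
  constructor
  · intro h b' hb'
    obtain ⟨c, hc, hs⟩ := (anyB_iff _ _).1 (h b' hb')
    exact ⟨c, Nat.lt_succ_iff.1 hc, hs⟩
  · intro h b' hb'
    obtain ⟨c, hc, hs⟩ := h b' hb'
    exact (anyB_iff _ _).2 ⟨c, Nat.lt_succ_of_le hc, hs⟩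

theorem okb_mono_t {cM : Code} {x y a b t t' : ℕ} (htt : t ≤ t')
    (h : okb cM x y a b t = true) : okb cM x y a b t' = true := by
  rw [okb_iff] at *
  intro b' hb'
  obtain ⟨c, hc, hs⟩ := h b' hb'
  exact ⟨c, le_trans hc htt, seen_mono htt hs⟩

theorem okb_anti_b {cM : Code} {x y a b b' t : ℕ} (hbb : b' ≤ b)
    (h : okb cM x y a b t = true) : okb cM x y a b' t = true := by
  rw [okb_iff] at *
  exact fun m hm => h m (Nat.lt_of_lt_of_le hm hbb)

theorem ell_mono {cM : Code} {x y a t t' : ℕ} (htt : t ≤ t') :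
    ell cM x y a t ≤ ell cM x y a t' := by
  calc cntB (fun b => okb cM x y a b t) (t+1)
      ≤ cntB (fun b => okb cM x y a b t') (t+1) :=
        cntB_mono_p (fun m hm => okb_mono_t htt hm) _
    _ ≤ cntB (fun b => okb cM x y a b t') (t'+1) :=
        cntB_mono_k _ (Nat.succ_le_succ htt)

theorem ell_symm (cM : Code) (x y a t : ℕ) : ell cM x y a t = ell cM y x a t := by
  simp only [ell, okb, min_comm x y, max_comm x y]

section WithMb

variable {Mb : ℕ → Bool} {cM : Code}
variable (hcM : ∀ v, eval cM v = Part.some (bif Mb v then 1 else 0))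

include hcM

theorem seen_sound {t v : ℕ} (h : seenB cM t v = true) : Mb v = true := by
  simp only [seenB, decide_eq_true_eq] at h
  have h1 : (1 : ℕ) ∈ eval cM v := evaln_sound (by rw [h]; rfl)
  rw [hcM v] at h1
  rcases Part.mem_some_iff.1 h1 with h2
  cases hMb : Mb v
  · rw [hMb] at h2; simp at h2
  · rfl

theorem seen_complete {v : ℕ} (h : Mb v = true) :
    ∃ k, ∀ t, k ≤ t → seenB cM t v = true := by
  have h1 : (1 : ℕ) ∈ eval cM v := by
    rw [hcM v, h]; exact Part.mem_some 1
  obtain ⟨k, hk⟩ := evaln_complete.1 h1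
  refine ⟨k, fun t ht => ?_⟩
  simp only [seenB, decide_eq_true_eq]
  exact evaln_mono ht hk

theorem ell_unbounded {x y a : ℕ}
    (h : ∀ b, ∃ c, Mb (e5 (min x y) (max x y) a b c) = true) :
    ∀ N, ∃ t, N ≤ ell cM x y a t := by
  have key : ∀ N, ∃ t, N ≤ t ∧ okb cM x y a N t = true := by
    intro N
    induction N with
    | zero => exact ⟨0, le_refl _, by rw [okb_iff]; intro b' hb'; omega⟩
    | succ N ih =>
      obtain ⟨t₀, ht₀, hok⟩ := ih
      obtain ⟨c, hc⟩ := h N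
      obtain ⟨k, hk⟩ := seen_complete hcM hc
      refine ⟨t₀ + (N + 1) + c + k, by omega, ?_⟩
      set t := t₀ + (N + 1) + c + k with hts
      rw [okb_iff]
      intro b' hb'
      rcases Nat.lt_succ_iff_lt_or_eq.1 hb' with hlt | heq
      · obtain ⟨c', hc', hs'⟩ := okb_iff.1 hok b' hlt
        have htt : t₀ ≤ t := by omega
        exact ⟨c', le_trans hc' htt, seen_mono htt hs'⟩
      · subst heq
        have hct : c ≤ t := by omega
        have hkt : k ≤ t := by omega
        exact ⟨c, hct, hk t hkt⟩
  intro N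
  obtain ⟨t, ht, hok⟩ := key N
  refine ⟨t, ?_⟩
  have hfull : ∀ m, m < N + 1 → okb cM x y a m t = true := fun m hm =>
    okb_anti_b (Nat.lt_succ_iff.1 hm) hok
  calc N ≤ N + 1 := Nat.le_succ N
    _ = cntB (fun b => okb cM x y a b t) (N+1) := (cntB_full hfull).symm
    _ ≤ cntB (fun b => okb cM x y a b t) (t+1) := cntB_mono_k _ (Nat.succ_le_succ ht)
    _ = ell cM x y a t := rfl

theorem ell_bounded {x y a : ℕ}
    (h : ¬ ∀ b, ∃ c, Mb (e5 (min x y) (max x y) a b c) = true) :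
    ∃ B, ∀ t, ell cM x y a t ≤ B := by
  push_neg at h
  obtain ⟨b₀, hb₀⟩ := h
  refine ⟨b₀ + 1, fun t => ?_⟩
  apply cntB_bound
  intro m hm
  by_contra hmb
  push_neg at hmb
  obtain ⟨c, _, hs⟩ := okb_iff.1 hm b₀ (Nat.lt_of_succ_le hmb)
  exact hb₀ c (seen_sound hcM hs)

end WithMb

theorem ell_stab {cM : Code} {x y a : ℕ} (h : ∃ B, ∀ t, ell cM x y a t ≤ B) :
    ∃ T, ∀ t, ell cM x y a t ≤ ell cM x y a T := by
  obtain ⟨B, hB⟩ := h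
  by_contra hc
  push_neg at hc
  have key : ∀ N, ∃ t, N ≤ ell cM x y a t := by
    intro N
    induction N with
    | zero => exact ⟨0, Nat.zero_le _⟩
    | succ N ih =>
      obtain ⟨t, ht⟩ := ih
      obtain ⟨t', ht'⟩ := hc t
      exact ⟨t', Nat.succ_le_of_lt (Nat.lt_of_le_of_lt ht ht')⟩
  obtain ⟨t, ht⟩ := key (B+1)
  exact absurd (hB t) (by omega)

theorem sync_symm (cM : Code) (n u v t : ℕ) : syncB cM n u v t = syncB cM n v u t := by
  have h1 : ∀ a t', ell cM u v a t' = ell cM v u a t' := fun a t' => ell_symm cM u v a t'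
  simp only [syncB, h1, min_comm u v, max_comm u v]

theorem sync_le {cM : Code} {n u v t : ℕ} (h : syncB cM n u v t = true) :
    u ≤ n ∧ v ≤ n := by
  simp only [syncB, Bool.and_eq_true, decide_eq_true_eq] at h
  have h1 : max u v ≤ Nat.pair (min u v) (max u v) := Nat.right_le_pair _ _
  exact ⟨le_trans (le_trans (le_max_left u v) h1) h.1,
    le_trans (le_trans (le_max_right u v) h1) h.1⟩

theorem sync_iff {cM : Code} {n u v t : ℕ} :
    syncB cM n u v t = true ↔
      Nat.pair (min u v) (max u v) ≤ n ∧
        ∃ a, a ≤ n ∧ n ≤ ell cM u v a t ∧ ell cM u v a (t-1) < ell cM u v a t := by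
  simp only [syncB, Bool.and_eq_true, decide_eq_true_eq, anyB_iff]
  constructor
  · rintro ⟨h1, a, ha, h2, h3⟩
    exact ⟨h1, a, Nat.lt_succ_iff.1 ha, h2, h3⟩
  · rintro ⟨h1, a, ha, h2, h3⟩
    exact ⟨h1, a, Nat.lt_succ_of_le ha, h2, h3⟩

theorem sync_bounded {cM : Code} {n u v : ℕ}
    (h : ∀ a, a ≤ n → ∃ B, ∀ t, ell cM u v a t ≤ B) :
    ∃ T, ∀ t, T < t → syncB cM n u v t = false := by
  classical
  have hT : ∀ a, a ≤ n → ∃ T, ∀ t, ell cM u v a t ≤ ell cM u v a T := fun a ha =>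
    ell_stab (h a ha)
  choose Tf hTf using hT
  -- global bound
  obtain ⟨T, hTbig⟩ : ∃ T, ∀ a (ha : a ≤ n), Tf a ha ≤ T := by
    refine ⟨(Finset.range (n+1)).sup (fun a => if ha : a ≤ n then Tf a ha else 0), ?_⟩
    intro a ha
    have : a ∈ Finset.range (n+1) := Finset.mem_range.2 (Nat.lt_succ_of_le ha)
    have h2 := Finset.le_sup (f := fun a => if ha : a ≤ n then Tf a ha else 0) this
    simpa [ha] using h2
  refine ⟨T + 1, fun t ht => ?_⟩
  by_contra hc
  have hsync := sync_iff.1 (by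
    cases hs : syncB cM n u v t
    · exact absurd hs hc
    · rfl)
  obtain ⟨_, a, ha, _, hlt⟩ := hsync
  have h1 : Tf a ha ≤ t - 1 := by
    have := hTbig a ha
    omega
  have h2 : ell cM u v a t ≤ ell cM u v a (Tf a ha) := hTf a ha t
  have h3 : ell cM u v a (Tf a ha) ≤ ell cM u v a (t-1) := ell_mono h1
  omega

theorem sync_inf {Mb : ℕ → Bool} {cM : Code}
    (hcM : ∀ v, eval cM v = Part.some (bif Mb v then 1 else 0)) {u v a₀ : ℕ}
    (h : ∀ b, ∃ c, Mb (e5 (min u v) (max u v) a₀ b c) = true) {n : ℕ}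
    (hn1 : a₀ ≤ n) (hn2 : Nat.pair (min u v) (max u v) ≤ n) :
    ∀ T, ∃ t, T < t ∧ syncB cM n u v t = true := by
  intro T
  have hub := ell_unbounded hcM h
  have hex : ∃ t, max (ell cM u v a₀ (T+1)) n < ell cM u v a₀ t := by
    obtain ⟨t, ht⟩ := hub (max (ell cM u v a₀ (T+1)) n + 1)
    exact ⟨t, by omega⟩
  classical
  set t1 := Nat.find hex with ht1def
  have hP : max (ell cM u v a₀ (T+1)) n < ell cM u v a₀ t1 := Nat.find_spec hex
  have hmin : ∀ t', t' < t1 → ¬ (max (ell cM u v a₀ (T+1)) n < ell cM u v a₀ t') :=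
    fun t' ht' => Nat.find_min hex ht'
  have hTt : T + 1 < t1 := by
    by_contra hc
    push_neg at hc
    have := ell_mono (cM := cM) (x := u) (y := v) (a := a₀) hc
    omega
  have hd : ell cM u v a₀ (t1 - 1) ≤ max (ell cM u v a₀ (T+1)) n := by
    have := hmin (t1 - 1) (by omega)
    omega
  refine ⟨t1, by omega, sync_iff.2 ⟨hn2, a₀, hn1, by omega, by omega⟩⟩

/-! ### reachability -/

def filtB (p : ℕ → Bool) : List ℕ → List ℕ
  | [] => []
  | a :: l => bif p a then a :: filtB p l else filtB p l

def anyL (p : ℕ → Bool) : List ℕ → Bool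
  | [] => false
  | a :: l => p a || anyL p l

theorem mem_filtB {p : ℕ → Bool} {x : ℕ} : ∀ {l : List ℕ},
    x ∈ filtB p l ↔ x ∈ l ∧ p x = true
  | [] => by simp [filtB]
  | a :: l => by
    rw [filtB]
    cases hp : p a
    · rw [cond_false, mem_filtB (l := l)]
      simp only [List.mem_cons]
      constructor
      · rintro ⟨h1, h2⟩; exact ⟨Or.inr h1, h2⟩
      · rintro ⟨h1 | h1, h2⟩
        · subst h1; rw [hp] at h2; cases h2
        · exact ⟨h1, h2⟩
    · rw [cond_true]
      simp only [List.mem_cons, mem_filtB (l := l)]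
      constructor
      · rintro (h1 | ⟨h1, h2⟩)
        · subst h1; exact ⟨Or.inl rfl, hp⟩
        · exact ⟨Or.inr h1, h2⟩
      · rintro ⟨h1 | h1, h2⟩
        · exact Or.inl h1
        · exact Or.inr ⟨h1, h2⟩

theorem anyL_iff {p : ℕ → Bool} : ∀ {l : List ℕ},
    anyL p l = true ↔ ∃ u ∈ l, p u = true
  | [] => by simp [anyL]
  | a :: l => by
    rw [anyL, Bool.or_eq_true, anyL_iff (l := l)]
    simp only [List.mem_cons]
    constructor
    · rintro (h | ⟨u, h1, h2⟩)
      · exact ⟨a, Or.inl rfl, h⟩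
      · exact ⟨u, Or.inr h1, h2⟩
    · rintro ⟨u, h1 | h1, h2⟩
      · subst h1; exact Or.inl h2
      · exact Or.inr ⟨u, h1, h2⟩

def reachL (cM : Code) (n z s : ℕ) : ℕ → List ℕ
  | 0 => [z]
  | t+1 => reachL cM n z s t ++
      (bif decide (s < t+1) then
        filtB (fun x => anyL (fun u => syncB cM n u x (t+1)) (reachL cM n z s t))
          (List.range (n+1))
      else [])

theorem reach_refl (cM : Code) (n z s : ℕ) : ∀ t, z ∈ reachL cM n z s t
  | 0 => by simp [reachL]
  | t+1 => by
    simp only [reachL, List.mem_append]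
    exact Or.inl (reach_refl cM n z s t)

theorem reach_mono {cM : Code} {n z s : ℕ} {t t' : ℕ} (h : t ≤ t') {x : ℕ}
    (hx : x ∈ reachL cM n z s t) : x ∈ reachL cM n z s t' := by
  induction t', h using Nat.le_induction with
  | base => exact hx
  | succ m hm ih =>
    simp only [reachL, List.mem_append]
    exact Or.inl ih

theorem reach_step {cM : Code} {n z s t u x : ℕ} (hu : u ∈ reachL cM n z s t)
    (hs : s < t + 1) (hx : x ≤ n) (hsync : syncB cM n u x (t+1) = true) :
    x ∈ reachL cM n z s (t+1) := by
  simp only [reachL, List.mem_append]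
  right
  rw [decide_eq_true hs]
  simp only [cond_true]
  rw [mem_filtB]
  exact ⟨List.mem_range.2 (Nat.lt_succ_of_le hx), anyL_iff.2 ⟨u, hu, hsync⟩⟩

theorem reach_inv {cM : Code} {n z s t x : ℕ} (h : x ∈ reachL cM n z s (t+1)) :
    x ∈ reachL cM n z s t ∨
      (s < t + 1 ∧ ∃ u ∈ reachL cM n z s t, syncB cM n u x (t+1) = true) := by
  simp only [reachL, List.mem_append] at h
  rcases h with h | h
  · exact Or.inl h
  · right
    by_cases hst : s < t + 1
    · rw [decide_eq_true hst] at h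
      simp only [cond_true] at h
      rw [mem_filtB] at h
      obtain ⟨u, hu, hsync⟩ := anyL_iff.1 h.2
      exact ⟨hst, u, hu, hsync⟩
    · rw [decide_eq_false hst] at h
      simp at h

/-! ### main verification -/

def colMem (cM : Code) (i n x : ℕ) : Prop :=
  ∃ t, i ∈ reachL cM n x.unpair.1 x.unpair.2 t

section Main

variable {F : ℕ → ℕ → Prop} (hE : Equivalence F)
variable {Mb : ℕ → Bool} {cM : Code}
variable (hcM : ∀ v, eval cM v = Part.some (bif Mb v then 1 else 0))
variable (hchar : ∀ u v, F u v ↔ ∃ a, ∀ b, ∃ c, Mb (e5 (min u v) (max u v) a b c) = true)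

include hE hcM hchar
set_option linter.unusedSectionVars false

theorem sync_spurious {n u v : ℕ} (hnF : ¬ F u v) :
    ∃ T, ∀ t, T < t → syncB cM n u v t = false := by
  apply sync_bounded
  intro a _
  apply ell_bounded hcM
  intro hall
  exact hnF ((hchar u v).2 ⟨a, hall⟩)

theorem stage_bound (n : ℕ) :
    ∃ S₀, ∀ u v t, S₀ < t → syncB cM n u v t = true → F u v := by
  classical
  have hTq : ∀ q : ℕ × ℕ, ∃ T, ¬ F q.1 q.2 → ∀ t, T < t → syncB cM n q.1 q.2 t = false := by
    intro q
    by_cases hq : F q.1 q.2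
    · exact ⟨0, fun h => absurd hq h⟩
    · obtain ⟨T, hT⟩ := sync_spurious hE hcM hchar (n := n) hq
      exact ⟨T, fun _ => hT⟩
  choose Tq hTq using hTq
  refine ⟨(Finset.range (n+1) ×ˢ Finset.range (n+1)).sup Tq, fun u v t ht hsync => ?_⟩
  by_contra hnF
  have huv := sync_le hsync
  have hmem : (u, v) ∈ Finset.range (n+1) ×ˢ Finset.range (n+1) := by
    rw [Finset.mem_product]
    exact ⟨Finset.mem_range.2 (Nat.lt_succ_of_le huv.1),
      Finset.mem_range.2 (Nat.lt_succ_of_le huv.2)⟩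
  have hle := Finset.le_sup (f := Tq) hmem
  have := hTq (u, v) hnF t (by omega)
  rw [this] at hsync
  cases hsync

theorem sync_positive {i j : ℕ} (hF : F i j) :
    ∃ N, ∀ n, N ≤ n → ∀ T, ∃ t, T < t ∧ syncB cM n i j t = true := by
  obtain ⟨a₀, hall⟩ := (hchar i j).1 hF
  refine ⟨max a₀ (Nat.pair (min i j) (max i j)), fun n hn T => ?_⟩
  exact sync_inf hcM hall (le_trans (le_max_left _ _) hn)
    (le_trans (le_max_right _ _) hn) T

theorem col_subset {n i j : ℕ}
    (hsyncs : ∀ T, ∃ t, T < t ∧ syncB cM n i j t = true) {x : ℕ}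
    (hx : colMem cM i n x) : colMem cM j n x := by
  obtain ⟨t₀, hreach⟩ := hx
  obtain ⟨t, ht, hsync⟩ := hsyncs (max t₀ x.unpair.2)
  have ht1 : t - 1 + 1 = t := by omega
  have hmono : i ∈ reachL cM n x.unpair.1 x.unpair.2 (t - 1) :=
    reach_mono (by omega) hreach
  refine ⟨t, ?_⟩
  rw [← ht1]
  exact reach_step hmono (by omega) (sync_le hsync).2 (by rw [ht1]; exact hsync)

theorem col_pos {i j : ℕ} (hF : F i j) :
    ∃ N, ∀ n, N ≤ n → {x | colMem cM i n x} = {x | colMem cM j n x} := by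
  obtain ⟨N, hN⟩ := sync_positive hE hcM hchar hF
  refine ⟨N, fun n hn => Set.ext fun x => ?_⟩
  constructor
  · exact fun hx => col_subset hE hcM hchar (hN n hn) hx
  · intro hx
    have hsyncs : ∀ T, ∃ t, T < t ∧ syncB cM n j i t = true := by
      intro T
      obtain ⟨t, ht, hs⟩ := hN n hn T
      exact ⟨t, ht, by rw [sync_symm]; exact hs⟩
    exact col_subset hE hcM hchar hsyncs hx

theorem col_neg {i j : ℕ} (hnF : ¬ F i j) (n : ℕ) :
    {x | colMem cM i n x} ≠ {x | colMem cM j n x} := by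
  obtain ⟨S₀, hS₀⟩ := stage_bound hE hcM hchar (F := F) n
  intro heq
  have hxmem : colMem cM i n (Nat.pair i S₀) := by
    refine ⟨0, ?_⟩
    simp only [Nat.unpair_pair]
    exact reach_refl cM n i S₀ 0
  have hclaim : ∀ t v, v ∈ reachL cM n i S₀ t → F i v := by
    intro t
    induction t with
    | zero =>
      intro v hv
      simp only [reachL, List.mem_singleton] at hv
      rw [hv]
      exact hE.refl i
    | succ t ih =>
      intro v hv
      rcases reach_inv hv with h | ⟨hs, u, hu, hsync⟩
      · exact ih v h
      · exact hE.trans (ih u hu) (hS₀ u v (t+1) hs hsync)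
  have hxmem' : colMem cM j n (Nat.pair i S₀) := by
    rw [← Set.mem_setOf_eq (p := fun x => colMem cM j n x), ← heq]
    exact hxmem
  obtain ⟨t, hreach⟩ := hxmem'
  simp only [Nat.unpair_pair] at hreach
  exact hnF (hclaim t j hreach)

theorem main_iff (i j : ℕ) :
    F i j ↔ {n | {x | colMem cM i n x} ≠ {x | colMem cM j n x}}.Finite := by
  constructor
  · intro hF
    obtain ⟨N, hN⟩ := col_pos hE hcM hchar hF
    refine (Set.finite_Iio N).subset fun n hn => ?_
    simp only [Set.mem_setOf_eq] at hn
    rw [Set.mem_Iio]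
    by_contra hc
    exact hn (hN n (Nat.not_lt.1 hc))
  · intro hfin
    by_contra hnF
    have : {n | {x | colMem cM i n x} ≠ {x | colMem cM j n x}} = Set.univ :=
      Set.eq_univ_of_forall fun n => col_neg hE hcM hchar hnF n
    rw [this] at hfin
    exact Set.infinite_univ hfin

end Main

/-! ### computability layer -/

section Prim
open Primrec

variable {α : Type*} [Primcodable α]

theorem allB_eq_rec (p : ℕ → Bool) (k : ℕ) :
    allB p k = k.rec (motive := fun _ => Bool) true (fun m ih => ih && p m) := by
  induction k with
  | zero => rfl
  | succ k ih => rw [allB, ih]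

theorem anyB_eq_rec (p : ℕ → Bool) (k : ℕ) :
    anyB p k = k.rec (motive := fun _ => Bool) false (fun m ih => ih || p m) := by
  induction k with
  | zero => rfl
  | succ k ih => rw [anyB, ih]

theorem cntB_eq_rec (p : ℕ → Bool) (k : ℕ) :
    cntB p k = k.rec (motive := fun _ => ℕ) 0 (fun m ih => ih + (bif p m then 1 else 0)) := by
  induction k with
  | zero => rfl
  | succ k ih => rw [cntB, ih]

theorem pr_allB {p : α → ℕ → Bool} (hp : Primrec₂ p) :
    Primrec₂ fun a k => allB (p a) k := by
  have h := Primrec.nat_rec (f := fun _ : α => true)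
    (g := fun (a : α) (q : ℕ × Bool) => q.2 && p a q.1) (const true)
    (Primrec.and.comp (snd.comp snd) (hp.comp fst (fst.comp snd)))
  exact Primrec.of_eq h fun q => (allB_eq_rec (p q.1) q.2).symm

theorem pr_anyB {p : α → ℕ → Bool} (hp : Primrec₂ p) :
    Primrec₂ fun a k => anyB (p a) k := by
  have h := Primrec.nat_rec (f := fun _ : α => false)
    (g := fun (a : α) (q : ℕ × Bool) => q.2 || p a q.1) (const false)
    (Primrec.or.comp (snd.comp snd) (hp.comp fst (fst.comp snd)))
  exact Primrec.of_eq h fun q => (anyB_eq_rec (p q.1) q.2).symm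

theorem pr_cntB {p : α → ℕ → Bool} (hp : Primrec₂ p) :
    Primrec₂ fun a k => cntB (p a) k := by
  have h := Primrec.nat_rec (f := fun _ : α => (0 : ℕ))
    (g := fun (a : α) (q : ℕ × ℕ) => q.2 + (bif p a q.1 then 1 else 0)) (const 0)
    (nat_add.comp (snd.comp snd)
      (Primrec.cond (hp.comp fst (fst.comp snd)) (const 1) (const 0)))
  exact Primrec.of_eq h fun q => (cntB_eq_rec (p q.1) q.2).symm

theorem anyL_eq_foldr (p : ℕ → Bool) (l : List ℕ) :
    anyL p l = l.foldr (fun u acc => p u || acc) false := by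
  induction l with
  | nil => rfl
  | cons a l ih => rw [anyL, ih, List.foldr_cons]

theorem filtB_eq_foldr (p : ℕ → Bool) (l : List ℕ) :
    filtB p l = l.foldr (fun a acc => bif p a then a :: acc else acc) [] := by
  induction l with
  | nil => rfl
  | cons a l ih => rw [filtB, ih, List.foldr_cons]

theorem pr_anyL {p : α → ℕ → Bool} {l : α → List ℕ} (hp : Primrec₂ p) (hl : Primrec l) :
    Primrec fun a => anyL (p a) (l a) := by
  have h := Primrec.list_foldr (g := fun _ : α => false)
    (h := fun (a : α) (q : ℕ × Bool) => p a q.1 || q.2) hl (const false)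
    (Primrec.or.comp (hp.comp fst (fst.comp snd)) (snd.comp snd))
  exact h.of_eq fun a => (anyL_eq_foldr _ _).symm

theorem pr_filtB {p : α → ℕ → Bool} {l : α → List ℕ} (hp : Primrec₂ p) (hl : Primrec l) :
    Primrec fun a => filtB (p a) (l a) := by
  have h := Primrec.list_foldr (g := fun _ : α => ([] : List ℕ))
    (h := fun (a : α) (q : ℕ × List ℕ) => bif p a q.1 then q.1 :: q.2 else q.2) hl (const [])
    (Primrec.cond (hp.comp fst (fst.comp snd))
      (list_cons.comp (fst.comp snd) (snd.comp snd)) (snd.comp snd))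
  exact h.of_eq fun a => (filtB_eq_foldr _ _).symm

variable (cM : Code)

theorem pr_seenB : Primrec₂ fun t v => seenB cM t v := by
  have h1 : Primrec fun q : ℕ × ℕ => evaln q.1 cM q.2 :=
    primrec_evaln.comp (Primrec.pair (Primrec.pair fst (const cM)) snd)
  exact (Primrec.eq.comp h1 (const (some 1))).decide.to₂

theorem pr_e5 {x y a b c : α → ℕ} (hx : Primrec x) (hy : Primrec y) (ha : Primrec a)
    (hb : Primrec b) (hc : Primrec c) :
    Primrec fun w => e5 (x w) (y w) (a w) (b w) (c w) :=
  Primrec₂.natPair.comp hx (Primrec₂.natPair.comp hy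
    (Primrec₂.natPair.comp ha (Primrec₂.natPair.comp hb hc)))

theorem pr_okb {x y a b t : α → ℕ} (hx : Primrec x) (hy : Primrec y) (ha : Primrec a)
    (hb : Primrec b) (ht : Primrec t) :
    Primrec fun w => okb cM (x w) (y w) (a w) (b w) (t w) := by
  have hseen : Primrec₂ fun (wb : α × ℕ) (c : ℕ) =>
      seenB cM (t wb.1)
        (e5 (min (x wb.1) (y wb.1)) (max (x wb.1) (y wb.1)) (a wb.1) wb.2 c) :=
    (pr_seenB cM).comp (ht.comp (fst.comp fst))
      (pr_e5 (nat_min.comp (hx.comp (fst.comp fst)) (hy.comp (fst.comp fst)))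
        (nat_max.comp (hx.comp (fst.comp fst)) (hy.comp (fst.comp fst)))
        (ha.comp (fst.comp fst)) (snd.comp fst) snd)
  have hinner : Primrec₂ fun (w : α) (b' : ℕ) =>
      anyB (fun c => seenB cM (t w)
        (e5 (min (x w) (y w)) (max (x w) (y w)) (a w) b' c)) (t w + 1) :=
    (pr_anyB hseen).comp Primrec.id (succ.comp (ht.comp fst))
  exact (pr_allB hinner).comp Primrec.id hb

theorem pr_ell {x y a t : α → ℕ} (hx : Primrec x) (hy : Primrec y) (ha : Primrec a)
    (ht : Primrec t) :
    Primrec fun w => ell cM (x w) (y w) (a w) (t w) := by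
  have hq : Primrec₂ fun (w : α) (b : ℕ) => okb cM (x w) (y w) (a w) b (t w) :=
    pr_okb cM (hx.comp fst) (hy.comp fst) (ha.comp fst) snd (ht.comp fst)
  exact (pr_cntB hq).comp Primrec.id (succ.comp ht)

theorem pr_syncB {n u v t : α → ℕ} (hn : Primrec n) (hu : Primrec u) (hv : Primrec v)
    (ht : Primrec t) :
    Primrec fun w => syncB cM (n w) (u w) (v w) (t w) := by
  have h1 : Primrec fun w =>
      decide (Nat.pair (min (u w) (v w)) (max (u w) (v w)) ≤ n w) :=
    (nat_le.comp (Primrec₂.natPair.comp (nat_min.comp hu hv) (nat_max.comp hu hv)) hn).decide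
  have hell : Primrec fun q : α × ℕ => ell cM (u q.1) (v q.1) q.2 (t q.1) :=
    pr_ell cM (hu.comp fst) (hv.comp fst) snd (ht.comp fst)
  have hell' : Primrec fun q : α × ℕ => ell cM (u q.1) (v q.1) q.2 (t q.1 - 1) :=
    pr_ell cM (hu.comp fst) (hv.comp fst) snd (nat_sub.comp (ht.comp fst) (const 1))
  have ha2 : Primrec₂ fun (w : α) (a : ℕ) =>
      (decide (n w ≤ ell cM (u w) (v w) a (t w)) &&
        decide (ell cM (u w) (v w) a (t w - 1) < ell cM (u w) (v w) a (t w))) :=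
    Primrec.and.comp (nat_le.comp (hn.comp fst) hell).decide (nat_lt.comp hell' hell).decide
  have h2 : Primrec fun w =>
      anyB (fun a =>
        decide (n w ≤ ell cM (u w) (v w) a (t w)) &&
          decide (ell cM (u w) (v w) a (t w - 1) < ell cM (u w) (v w) a (t w))) (n w + 1) :=
    (pr_anyB ha2).comp Primrec.id (succ.comp hn)
  exact Primrec.and.comp h1 h2

theorem reachL_eq_rec (n z s t : ℕ) :
    reachL cM n z s t = t.rec (motive := fun _ => List ℕ) [z]
      (fun m ih => ih ++ (bif decide (s < m + 1) then
        filtB (fun x => anyL (fun u => syncB cM n u x (m+1)) ih) (List.range (n+1))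
      else [])) := by
  induction t with
  | zero => rfl
  | succ t ih => rw [reachL, ih]

theorem pr_reachL {n z s : α → ℕ} (hn : Primrec n) (hz : Primrec z) (hs : Primrec s) :
    Primrec₂ fun (w : α) (t : ℕ) => reachL cM (n w) (z w) (s w) t := by
  have hsyncin : Primrec₂ fun (qx : (α × ℕ × List ℕ) × ℕ) (u : ℕ) =>
      syncB cM (n qx.1.1) u qx.2 (qx.1.2.1 + 1) :=
    pr_syncB cM (hn.comp (fst.comp (fst.comp fst))) snd (snd.comp fst)
      (succ.comp (fst.comp (snd.comp (fst.comp fst))))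
  have hanyl : Primrec₂ fun (q : α × ℕ × List ℕ) (x : ℕ) =>
      anyL (fun u => syncB cM (n q.1) u x (q.2.1 + 1)) q.2.2 :=
    pr_anyL hsyncin (snd.comp (snd.comp fst))
  have hfilt : Primrec fun q : α × ℕ × List ℕ =>
      filtB (fun x => anyL (fun u => syncB cM (n q.1) u x (q.2.1 + 1)) q.2.2)
        (List.range (n q.1 + 1)) :=
    pr_filtB hanyl (list_range.comp (succ.comp (hn.comp fst)))
  have hcond : Primrec fun q : α × ℕ × List ℕ => decide (s q.1 < q.2.1 + 1) :=
    (nat_lt.comp (hs.comp fst) (succ.comp (fst.comp snd))).decide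
  have hbranch : Primrec fun q : α × ℕ × List ℕ =>
      (bif decide (s q.1 < q.2.1 + 1) then
        filtB (fun x => anyL (fun u => syncB cM (n q.1) u x (q.2.1 + 1)) q.2.2)
          (List.range (n q.1 + 1))
      else []) :=
    Primrec.cond hcond hfilt (const [])
  have hg : Primrec₂ fun (w : α) (q : ℕ × List ℕ) =>
      q.2 ++ (bif decide (s w < q.1 + 1) then
        filtB (fun x => anyL (fun u => syncB cM (n w) u x (q.1 + 1)) q.2)
          (List.range (n w + 1))
      else []) :=
    list_append.comp (snd.comp snd) hbranch
  have h := Primrec.nat_rec (f := fun w : α => [z w])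
    (g := fun (w : α) (q : ℕ × List ℕ) =>
      q.2 ++ (bif decide (s w < q.1 + 1) then
        filtB (fun x => anyL (fun u => syncB cM (n w) u x (q.1 + 1)) q.2)
          (List.range (n w + 1))
      else []))
    (list_cons.comp hz (const [])) hg
  exact Primrec.of_eq h fun q => (reachL_eq_rec cM (n q.1) (z q.1) (s q.1) q.2).symm

end Prim

def memB (i : ℕ) (l : List ℕ) : Bool := anyL (fun u => decide (u = i)) l

theorem memB_iff {i : ℕ} {l : List ℕ} : memB i l = true ↔ i ∈ l := by
  rw [memB, anyL_iff]
  constructor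
  · rintro ⟨u, hu, hd⟩
    rw [decide_eq_true_eq] at hd
    rw [← hd]; exact hu
  · intro h
    exact ⟨i, h, by simp⟩

theorem rfind_some_dom {g : ℕ → Bool} :
    (Nat.rfind (fun t => Part.some (g t))).Dom ↔ ∃ t, g t = true := by
  refine Nat.rfind_dom.trans ?_
  constructor
  · rintro ⟨t, ht, _⟩
    exact ⟨t, by simpa using ht⟩
  · rintro ⟨t, ht⟩
    exact ⟨t, by simp [ht], fun {m} _ => trivial⟩

/-! ### final assembly -/

theorem completeness {F : ℕ → ℕ → Prop} (hE : Equivalence F)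
    (M : ℕ → ℕ → ℕ → ℕ → ℕ → Bool)
    (hMc : Computable (fun p : ℕ × ℕ × ℕ × ℕ × ℕ => M p.1 p.2.1 p.2.2.1 p.2.2.2.1 p.2.2.2.2))
    (hMiff : ∀ x y, F x y ↔ ∃ a, ∀ b, ∃ c, M x y a b c = true) :
    ∃ f : ℕ → ℕ, Computable f ∧ ∀ i j, F i j ↔ E1ce (f i) (f j) := by
  classical
  set Mb : ℕ → Bool := fun v =>
    M v.unpair.1 v.unpair.2.unpair.1 v.unpair.2.unpair.2.unpair.1
      v.unpair.2.unpair.2.unpair.2.unpair.1 v.unpair.2.unpair.2.unpair.2.unpair.2 with hMbdef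
  have hMb_e5 : ∀ x y a b c, Mb (e5 x y a b c) = M x y a b c := by
    intro x y a b c
    rw [hMbdef]
    simp only [e5, Nat.unpair_pair]
  have hdec : Primrec fun v : ℕ =>
      (v.unpair.1, v.unpair.2.unpair.1, v.unpair.2.unpair.2.unpair.1,
        v.unpair.2.unpair.2.unpair.2.unpair.1, v.unpair.2.unpair.2.unpair.2.unpair.2) := by
    have u1 : Primrec fun v : ℕ => v.unpair.1 := Primrec.fst.comp Primrec.unpair
    have u2 : Primrec fun v : ℕ => v.unpair.2 := Primrec.snd.comp Primrec.unpair
    exact u1.pair ((u1.comp u2).pair ((u1.comp (u2.comp u2)).pair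
      ((u1.comp (u2.comp (u2.comp u2))).pair (u2.comp (u2.comp (u2.comp u2))))))
  have hMbc : Computable Mb := hMc.comp hdec.to_comp
  have hg : Computable fun v : ℕ => (bif Mb v then (1 : ℕ) else 0) :=
    Computable.cond hMbc (Computable.const 1) (Computable.const 0)
  obtain ⟨cM, hcM0⟩ := exists_code.1 (Partrec.nat_iff.1 hg.partrec)
  have hcM : ∀ v, eval cM v = Part.some (bif Mb v then 1 else 0) := fun v => by
    rw [hcM0]; rfl
  have hchar : ∀ u v, F u v ↔ ∃ a, ∀ b, ∃ c, Mb (e5 (min u v) (max u v) a b c) = true := by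
    intro u v
    have hsymm : F u v ↔ F (min u v) (max u v) := by
      rcases le_total u v with h | h
      · rw [min_eq_left h, max_eq_right h]
      · rw [min_eq_right h, max_eq_left h]
        exact ⟨fun hf => hE.symm hf, fun hf => hE.symm hf⟩
    rw [hsymm, hMiff]
    simp only [hMb_e5]
  -- computable membership
  have hreachP : Primrec₂ fun (v t : ℕ) =>
      memB v.unpair.1 (reachL cM v.unpair.2.unpair.1 v.unpair.2.unpair.2.unpair.1
        v.unpair.2.unpair.2.unpair.2 t) := by
    have u1 : Primrec fun v : ℕ => v.unpair.1 := Primrec.fst.comp Primrec.unpair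
    have u2 : Primrec fun v : ℕ => v.unpair.2 := Primrec.snd.comp Primrec.unpair
    have hpeq : Primrec₂ fun (q : ℕ × ℕ) (u : ℕ) => decide (u = q.1.unpair.1) :=
      (Primrec.eq.comp Primrec.snd ((u1.comp Primrec.fst).comp Primrec.fst)).decide
    have hlst : Primrec fun q : ℕ × ℕ =>
        reachL cM q.1.unpair.2.unpair.1 q.1.unpair.2.unpair.2.unpair.1
          q.1.unpair.2.unpair.2.unpair.2 q.2 :=
      (pr_reachL cM (u1.comp u2) (u1.comp (u2.comp u2)) (u2.comp (u2.comp u2))).comp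
        Primrec.fst Primrec.snd
    exact pr_anyL hpeq hlst
  have hψ : Partrec fun v : ℕ => Nat.rfind fun t =>
      (Part.some (memB v.unpair.1 (reachL cM v.unpair.2.unpair.1
        v.unpair.2.unpair.2.unpair.1 v.unpair.2.unpair.2.unpair.2 t)) : Part Bool) :=
    Partrec.rfind (hreachP.to_comp.partrec₂)
  obtain ⟨cZ, hcZ⟩ := exists_code.1 (Partrec.nat_iff.1 hψ)
  obtain ⟨sm, sm_comp, sm_eval⟩ := smn
  refine ⟨fun i => Encodable.encode (sm cZ i),
    Primrec.encode.to_comp.comp (sm_comp.comp (Computable.const cZ) Computable.id), ?_⟩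
  have hWcol : ∀ i n, column (W (Encodable.encode (sm cZ i))) n = {x | colMem cM i n x} := by
    intro i n
    ext x
    show Nat.pair n x ∈ W _ ↔ _
    rw [W, Set.mem_setOf_eq, Denumerable.ofNat_encode, sm_eval]
    have heq := congrFun hcZ (Nat.pair i (Nat.pair n x))
    rw [heq]
    rw [Set.mem_setOf_eq, colMem]
    rw [rfind_some_dom]
    constructor
    · rintro ⟨t, ht⟩
      rw [Nat.unpair_pair, Nat.unpair_pair] at ht
      exact ⟨t, memB_iff.1 ht⟩
    · rintro ⟨t, ht⟩
      refine ⟨t, ?_⟩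
      rw [Nat.unpair_pair, Nat.unpair_pair]
      exact memB_iff.2 ht
  intro i j
  have hset : {n | column (W (Encodable.encode (sm cZ i))) n ≠
      column (W (Encodable.encode (sm cZ j))) n} =
      {n | {x | colMem cM i n x} ≠ {x | colMem cM j n x}} := by
    ext n
    rw [Set.mem_setOf_eq, Set.mem_setOf_eq, hWcol, hWcol]
  rw [E1ce, hset]
  exact main_iff hE hcM hchar i j

end Stmt16Aux

open Stmt16Aux in
/-- `E₁^{ce}` is a Σ⁰₃-complete equivalence relation. -/
theorem stmt_16 :
    Equivalence E1ce ∧ Sigma03Rel E1ce ∧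
    ∀ F : ℕ → ℕ → Prop, Equivalence F → Sigma03Rel F →
      ∃ f : ℕ → ℕ, Computable f ∧ ∀ i j, F i j ↔ E1ce (f i) (f j) := by
  refine ⟨equiv_E1ce, sigma3_E1ce, fun F hF hS => ?_⟩
  obtain ⟨M, hMc, hMiff⟩ := hS
  exact completeness hF M hMc hMiff
end
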